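/- arXiv:2209.04985 — 11 statements merged into one kernel-verified Lean document; each statement's English description precedes it below -/
import Mathlib

section
/- Let V be an n-dimensional Chebyshev subspace of C([-1,1]) with basis (v_1,...,v_n), let x^1,...,x^m be distinct points of [-1,1], and let x ∈ [-1,1] with x ∉ {x^1,...,x^m}. Then for every index set S ⊆ {1,...,m} with |S| = n, the matrix M_S is invertible and every entry of the vector M_S^{-1} b(x) ∈ ℝ^n is nonzero. -/
/-- An `n`-dimensional subspace `V` of `C(X, ℝ)` is a Chebyshev space if for all
`n` distinct points and all prescribed values there is a unique interpolant in `V`. -/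
def IsChebyshev {X : Type*} [TopologicalSpace X] (n : ℕ) (V : Submodule ℝ C(X, ℝ)) : Prop :=
  Module.finrank ℝ V = n ∧
    ∀ ξ : Fin n → X, Function.Injective ξ → ∀ γ : Fin n → ℝ,
      ∃! v : C(X, ℝ), v ∈ V ∧ ∀ i, v (ξ i) = γ i

/-- for a Chebyshev space `V` with basis `v₁,…,vₙ`, distinct points
`x¹,…,xᵐ`, and `x` distinct from all of them, every `n × n` submatrix `M_S` of
`M = (vⱼ(xⁱ))` is invertible and all entries of `M_S⁻¹ b(x)` are nonzero. -/
theorem chebyshev_submatrix_invertible_and_entries_nonzero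
    (n m : ℕ) (V : Submodule ℝ C(Set.Icc (-1 : ℝ) 1, ℝ))
    (hCheb : IsChebyshev n V)
    (v : Fin n → C(Set.Icc (-1 : ℝ) 1, ℝ))
    (hv_mem : ∀ j, v j ∈ V)
    (hv_indep : LinearIndependent ℝ v)
    (hv_span : Submodule.span ℝ (Set.range v) = V)
    (xpt : Fin m → Set.Icc (-1 : ℝ) 1) (hxpt : Function.Injective xpt)
    (x : Set.Icc (-1 : ℝ) 1) (hx : x ∉ Set.range xpt)
    (σ : Fin n → Fin m) (hσ : Function.Injective σ) :
    IsUnit (Matrix.of fun j l : Fin n => v j (xpt (σ l))) ∧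
      ∀ j : Fin n,
        ((Matrix.of fun j l : Fin n => v j (xpt (σ l)))⁻¹.mulVec
            (fun j => v j x)) j ≠ 0 := by
  obtain ⟨hdim, hcheb⟩ := hCheb
  set M : Matrix (Fin n) (Fin n) ℝ := Matrix.of fun j l : Fin n => v j (xpt (σ l)) with hMdef
  have hinj : Function.Injective (fun l => xpt (σ l)) := hxpt.comp hσ
  -- determinant is nonzero
  have hdet : M.det ≠ 0 := by
    intro h0
    obtain ⟨a, ha, hav⟩ := (Matrix.exists_vecMul_eq_zero_iff).mpr h0
    set w : C(Set.Icc (-1 : ℝ) 1, ℝ) := ∑ j, a j • v j with hw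
    have hwV : w ∈ V := Submodule.sum_mem _ fun j _ => Submodule.smul_mem _ _ (hv_mem j)
    have hwz : ∀ l, w (xpt (σ l)) = 0 := by
      intro l
      have h := congrFun hav l
      simp only [Matrix.vecMul, dotProduct, hMdef, Matrix.of_apply,
        Pi.zero_apply] at h
      simpa [hw, ContinuousMap.sum_apply] using h
    obtain ⟨u, _, huniq⟩ := hcheb (fun l => xpt (σ l)) hinj 0
    have hwu : w = u := huniq w ⟨hwV, fun i => hwz i⟩
    have h0u : (0 : C(Set.Icc (-1 : ℝ) 1, ℝ)) = u :=
      huniq 0 ⟨V.zero_mem, fun i => rfl⟩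
    have hw0 : w = 0 := hwu.trans h0u.symm
    have := (Fintype.linearIndependent_iff.mp hv_indep) a (by simpa [hw] using hw0)
    exact ha (funext this)
  have hMunit : IsUnit M := (Matrix.isUnit_iff_isUnit_det M).mpr hdet.isUnit
  refine ⟨hMunit, ?_⟩
  set c : Fin n → ℝ := M⁻¹.mulVec (fun j => v j x) with hc
  have hMc : M.mulVec c = fun j => v j x := by
    rw [hc, Matrix.mulVec_mulVec, Matrix.mul_nonsing_inv _ hdet.isUnit, Matrix.one_mulVec]
  -- key identity: for all w ∈ V, w x = ∑ l, c l * w (xpt (σ l))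
  have hkey : ∀ w ∈ V, w x = ∑ l, c l * w (xpt (σ l)) := by
    intro w hwV
    let φ : C(Set.Icc (-1 : ℝ) 1, ℝ) →ₗ[ℝ] ℝ :=
      { toFun := fun f => f x - ∑ l, c l * f (xpt (σ l))
        map_add' := by
          intro f g
          simp [mul_add, Finset.sum_add_distrib]
          try ring
        map_smul' := by
          intro r f
          simp [mul_left_comm, Finset.mul_sum, mul_sub]
          try ring }
    have hφv : ∀ j, φ (v j) = 0 := by
      intro j
      have h := congrFun hMc j
      simp only [Matrix.mulVec, dotProduct, hMdef, Matrix.of_apply] at h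
      simp only [φ, LinearMap.coe_mk, AddHom.coe_mk, sub_eq_zero]
      rw [← h]
      exact Finset.sum_congr rfl fun l _ => mul_comm _ _
    have hVle : V ≤ LinearMap.ker φ := by
      rw [← hv_span, Submodule.span_le]
      rintro _ ⟨j, rfl⟩
      exact hφv j
    have := hVle hwV
    rw [LinearMap.mem_ker] at this
    simpa [φ, sub_eq_zero] using this
  intro j0 hj0
  set ξ' : Fin n → Set.Icc (-1 : ℝ) 1 := fun l => if l = j0 then x else xpt (σ l) with hξ'
  have hξinj : Function.Injective ξ' := by
    intro a b hab
    simp only [hξ'] at hab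
    by_cases ha : a = j0 <;> by_cases hb : b = j0
    · exact ha.trans hb.symm
    · rw [if_pos ha, if_neg hb] at hab
      exact absurd ⟨σ b, hab.symm⟩ hx
    · rw [if_neg ha, if_pos hb] at hab
      exact absurd ⟨σ a, hab⟩ hx
    · rw [if_neg ha, if_neg hb] at hab
      exact hinj hab
  obtain ⟨w, ⟨hwV, hwval⟩, -⟩ := hcheb ξ' hξinj (fun l => if l = j0 then 1 else 0)
  have h1 : w x = 1 := by simpa [hξ'] using hwval j0
  have h0 : ∀ l, l ≠ j0 → w (xpt (σ l)) = 0 := by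
    intro l hl
    simpa [hξ', hl] using hwval l
  have hzero : (1 : ℝ) = 0 := by
    rw [← h1, hkey w hwV]
    apply Finset.sum_eq_zero
    intro l _
    by_cases hl : l = j0
    · subst hl; rw [hj0, zero_mul]
    · rw [h0 l hl, mul_zero]
  exact one_ne_zero hzero
end

section
/- Let V be an n-dimensional Chebyshev subspace of C([-1,1]) with basis (v_1,...,v_n), let x^1,...,x^m be distinct points of [-1,1], let x ∈ [-1,1] with x ∉ {x^1,...,x^m}, and let S ⊆ {1,...,m} with |S| = n. The vector a^{(S)}(x) ∈ ℝ^m defined by a^{(S)}(x)_S = M_S^{-1} b(x) and a^{(S)}(x)_i = 0 for i ∉ S is a minimizer of ‖a‖₁ over all a ∈ ℝ^m subject to Ma = b(x) if and only if ‖M_{S^c}^T M_S^{-T} sgn(M_S^{-1} b(x))‖_∞ ≤ 1. -/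
open Matrix

/-- The vector of `ℝ^m` supported on the image of `σ : Fin n → Fin m`
whose entry at `σ l` equals `c l`. -/
def sparseExt {n m : ℕ} (σ : Fin n → Fin m) (c : Fin n → ℝ) : Fin m → ℝ :=
  fun i => ∑ l, if i = σ l then c l else 0

lemma sparseExt_apply {n m : ℕ} {σ : Fin n → Fin m} (hσ : Function.Injective σ)
    (c : Fin n → ℝ) (l : Fin n) : sparseExt σ c (σ l) = c l := by
  simp only [sparseExt, hσ.eq_iff, Finset.sum_ite_eq, Finset.mem_univ, if_true]

lemma sparseExt_eq_zero {n m : ℕ} {σ : Fin n → Fin m} (c : Fin n → ℝ)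
    {i : Fin m} (hi : i ∉ Set.range σ) : sparseExt σ c i = 0 := by
  unfold sparseExt
  refine Finset.sum_eq_zero fun l _ => ?_
  rw [if_neg]
  exact fun h => hi ⟨l, h.symm⟩

lemma sum_abs_sparseExt {n m : ℕ} {σ : Fin n → Fin m} (hσ : Function.Injective σ)
    (c : Fin n → ℝ) : ∑ i, |sparseExt σ c i| = ∑ l, |c l| := by
  classical
  have h1 : ∑ l, |c l| = ∑ i ∈ Finset.univ.image σ, |sparseExt σ c i| := by
    rw [Finset.sum_image (fun a _ b _ h => hσ h)]
    exact Finset.sum_congr rfl fun l _ => by rw [sparseExt_apply hσ]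
  rw [h1]
  refine (Finset.sum_subset (Finset.subset_univ _) ?_).symm
  intro i _ hi
  rw [sparseExt_eq_zero c, abs_zero]
  rintro ⟨l, hl⟩
  exact hi (Finset.mem_image.2 ⟨l, Finset.mem_univ l, hl⟩)

lemma mulVec_sparseExt {n m : ℕ} (M : Matrix (Fin n) (Fin m) ℝ) (σ : Fin n → Fin m)
    (c : Fin n → ℝ) (j : Fin n) :
    M.mulVec (sparseExt σ c) j = ∑ l, M j (σ l) * c l := by
  simp only [Matrix.mulVec, dotProduct, sparseExt, Finset.mul_sum]
  rw [Finset.sum_comm]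
  refine Finset.sum_congr rfl fun l _ => ?_
  simp [mul_ite]

lemma cheb_vanish {X : Type*} [TopologicalSpace X] {n : ℕ} {V : Submodule ℝ C(X, ℝ)}
    (hCheb : IsChebyshev n V) (ξ : Fin n → X) (hξ : Function.Injective ξ)
    (u : C(X, ℝ)) (hu : u ∈ V) (h0 : ∀ i, u (ξ i) = 0) : u = 0 := by
  obtain ⟨w, _, huniq⟩ := hCheb.2 ξ hξ 0
  have h1 := huniq u ⟨hu, fun i => h0 i⟩
  have h2 := huniq 0 ⟨V.zero_mem, fun i => rfl⟩
  rw [h1, h2]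

lemma real_mul_sign (x : ℝ) : x * Real.sign x = |x| := by
  rcases lt_trichotomy x 0 with h | h | h
  · rw [Real.sign_of_neg h, abs_of_neg h]; ring
  · simp [h]
  · rw [Real.sign_of_pos h, abs_of_pos h]; ring

lemma contSum_apply {X : Type*} [TopologicalSpace X] {n : ℕ} (w : Fin n → ℝ)
    (v : Fin n → C(X, ℝ)) (z : X) : (∑ j, w j • v j) z = ∑ j, w j * v j z := by
  simp

/-- characterization of optimality of the `n`-sparse vector
`a⁽ˢ⁾(x)` (supported on `S`, with `a⁽ˢ⁾(x)_S = M_S⁻¹ b(x)`) for the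
`ℓ¹`-minimization program `min ‖a‖₁ s.t. Ma = b(x)`:
it is a minimizer iff `‖M_{Sᶜ}ᵀ M_S⁻ᵀ sgn(M_S⁻¹ b(x))‖_∞ ≤ 1`. -/
theorem sparse_l1_minimizer_iff
    (n m : ℕ) (V : Submodule ℝ C(Set.Icc (-1 : ℝ) 1, ℝ))
    (hCheb : IsChebyshev n V)
    (v : Fin n → C(Set.Icc (-1 : ℝ) 1, ℝ))
    (hv_mem : ∀ j, v j ∈ V)
    (hv_indep : LinearIndependent ℝ v)
    (hv_span : Submodule.span ℝ (Set.range v) = V)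
    (xpt : Fin m → Set.Icc (-1 : ℝ) 1) (hxpt : Function.Injective xpt)
    (x : Set.Icc (-1 : ℝ) 1) (hx : x ∉ Set.range xpt)
    (σ : Fin n → Fin m) (hσ : Function.Injective σ)
    -- `M`, `M_S` and `b(x)`:
    (M : Matrix (Fin n) (Fin m) ℝ) (hM : ∀ j i, M j i = v j (xpt i))
    (MS : Matrix (Fin n) (Fin n) ℝ) (hMS : ∀ j l, MS j l = v j (xpt (σ l)))
    (b : Fin n → ℝ) (hb : ∀ j, b j = v j x) :
    (M.mulVec (sparseExt σ (MS⁻¹.mulVec b)) = b ∧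
        ∀ a : Fin m → ℝ, M.mulVec a = b →
          ∑ i, |sparseExt σ (MS⁻¹.mulVec b) i| ≤ ∑ i, |a i|) ↔
      ∀ i : Fin m, i ∉ Set.range σ →
        |∑ j, M j i * ((MS⁻¹)ᵀ.mulVec fun l => Real.sign (MS⁻¹.mulVec b l)) j| ≤ 1 := by
  classical
  set c : Fin n → ℝ := MS⁻¹.mulVec b with hc
  set s : Fin n → ℝ := fun l => Real.sign (c l) with hs
  set y : Fin n → ℝ := (MS⁻¹)ᵀ.mulVec s with hy
  have hMcol : ∀ j l, M j (σ l) = MS j l := fun j l => by rw [hM, hMS]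
  -- invertibility of MS
  have hdet : IsUnit MS.det := by
    rw [isUnit_iff_ne_zero]
    intro h
    obtain ⟨yv, hyv0, hyvMS⟩ := Matrix.exists_vecMul_eq_zero_iff.mpr h
    have hu : (∑ j, yv j • v j) = 0 := by
      refine cheb_vanish hCheb (xpt ∘ σ) (hxpt.comp hσ) _
        (Submodule.sum_mem _ fun j _ => Submodule.smul_mem _ _ (hv_mem j)) fun l => ?_
      have h2 := congrFun hyvMS l
      simp only [Matrix.vecMul, dotProduct, Pi.zero_apply] at h2
      rw [contSum_apply, Function.comp_apply]
      simp only [hMS] at h2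
      exact h2
    exact hyv0 (funext (Fintype.linearIndependent_iff.mp hv_indep yv hu))
  have hinv1 : MS * MS⁻¹ = 1 := Matrix.mul_nonsing_inv _ hdet
  have hinv2 : MS⁻¹ * MS = 1 := Matrix.nonsing_inv_mul _ hdet
  have hMSc : MS.mulVec c = b := by
    rw [hc, Matrix.mulVec_mulVec, hinv1, Matrix.one_mulVec]
  have hfeas : M.mulVec (sparseExt σ c) = b := by
    funext j
    rw [mulVec_sparseExt]
    simp only [hMcol]
    exact congrFun hMSc j
  have habs_s : ∀ l, |s l| ≤ 1 := by
    intro l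
    rcases lt_trichotomy (c l) 0 with h | h | h <;>
      simp [hs, Real.sign_of_neg, Real.sign_of_pos, h]
  have hpσ : ∀ l, (∑ j, M j (σ l) * y j) = s l := by
    intro l
    have h1 : MSᵀ.mulVec y = s := by
      rw [hy, Matrix.mulVec_mulVec, ← Matrix.transpose_mul, hinv2, Matrix.transpose_one,
        Matrix.one_mulVec]
    calc ∑ j, M j (σ l) * y j = ∑ j, MSᵀ l j * y j := by
          exact Finset.sum_congr rfl fun j _ => by rw [hMcol, Matrix.transpose_apply]
      _ = MSᵀ.mulVec y l := rfl
      _ = s l := by rw [h1]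
  have hnorm0 : ∑ i, |sparseExt σ c i| = ∑ j, b j * y j := by
    rw [sum_abs_sparseExt hσ,
      Finset.sum_congr rfl fun l (_ : l ∈ Finset.univ) => (real_mul_sign (c l)).symm]
    calc ∑ l, c l * Real.sign (c l) = ∑ l, ∑ j, MS⁻¹ l j * b j * s l := by
          refine Finset.sum_congr rfl fun l _ => ?_
          rw [show Real.sign (c l) = s l from rfl,
            show c l = ∑ j, MS⁻¹ l j * b j from rfl, Finset.sum_mul]
      _ = ∑ j, ∑ l, MS⁻¹ l j * b j * s l := Finset.sum_comm
      _ = ∑ j, b j * y j := by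
          refine Finset.sum_congr rfl fun j _ => ?_
          rw [hy]
          simp only [Matrix.mulVec, dotProduct, Matrix.transpose_apply, Finset.mul_sum]
          exact Finset.sum_congr rfl fun l _ => by ring
  constructor
  · rintro ⟨-, hmin⟩ i0 hi0
    by_contra hqc
    push_neg at hqc
    set q : ℝ := ∑ j, M j i0 * y j with hqdef
    -- all coordinates of c are nonzero
    have hc0 : ∀ l, c l ≠ 0 := by
      intro l hcl
      have humem : (∑ j, MS⁻¹ l j • v j) ∈ V :=
        Submodule.sum_mem _ fun j _ => Submodule.smul_mem _ _ (hv_mem j)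
      have huval : ∀ k, (∑ j, MS⁻¹ l j • v j) (xpt (σ k)) = if l = k then 1 else 0 := by
        intro k
        rw [contSum_apply]
        simp only [← hMS]
        rw [show (∑ j, MS⁻¹ l j * MS j k) = (MS⁻¹ * MS) l k from (Matrix.mul_apply).symm,
          hinv2, Matrix.one_apply]
      have hux : (∑ j, MS⁻¹ l j • v j) x = 0 := by
        rw [contSum_apply]
        simp only [← hb]
        have h2 : (∑ j, MS⁻¹ l j * b j) = c l := rfl
        rw [h2, hcl]
      set ξ : Fin n → Set.Icc (-1 : ℝ) 1 := fun k => if k = l then x else xpt (σ k) with hξdef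
      have hξ : Function.Injective ξ := by
        intro k k' hkk'
        by_cases h1 : k = l <;> by_cases h2 : k' = l
        · rw [h1, h2]
        · exfalso
          simp [hξdef, h1, h2] at hkk'
          exact hx ⟨σ k', hkk'.symm⟩
        · exfalso
          simp [hξdef, h1, h2] at hkk'
          exact hx ⟨σ k, hkk'⟩
        · simp [hξdef, h1, h2] at hkk'
          exact hσ (hxpt hkk')
      have hu0 : (∑ j, MS⁻¹ l j • v j) = 0 := by
        refine cheb_vanish hCheb ξ hξ _ humem fun k => ?_
        by_cases hk : k = l
        · have : ξ k = x := by rw [hξdef]; simp [hk]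
          rw [this, hux]
        · have : ξ k = xpt (σ k) := by rw [hξdef]; simp [hk]
          rw [this, huval k, if_neg fun h => hk h.symm]
      have h3 : (1 : ℝ) = 0 := by
        have := huval l
        rw [hu0] at this
        simpa using this.symm
      exact one_ne_zero h3
    -- the correction direction d
    set d : Fin n → ℝ := MS⁻¹.mulVec (fun j => M j i0) with hd
    have hMSd : MS.mulVec d = fun j => M j i0 := by
      rw [hd, Matrix.mulVec_mulVec, hinv1, Matrix.one_mulVec]
    have hds : ∑ l, d l * s l = q := by
      calc ∑ l, d l * s l = ∑ l, ∑ j, MS⁻¹ l j * M j i0 * s l := by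
            refine Finset.sum_congr rfl fun l _ => ?_
            rw [show d l = ∑ j, MS⁻¹ l j * M j i0 from rfl, Finset.sum_mul]
        _ = ∑ j, ∑ l, MS⁻¹ l j * M j i0 * s l := Finset.sum_comm
        _ = q := by
            rw [hqdef]
            refine Finset.sum_congr rfl fun j _ => ?_
            rw [hy]
            simp only [Matrix.mulVec, dotProduct, Matrix.transpose_apply, Finset.mul_sum]
            exact Finset.sum_congr rfl fun l _ => by ring
    -- choose a small stepsize ε
    obtain ⟨ε, hε0, hεlt⟩ : ∃ ε : ℝ, 0 < ε ∧ ∀ l, ε * |d l| < |c l| := by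
      have hne : (insert (1 : ℝ) (Finset.univ.image fun l => |c l| / (|d l| + 1))).Nonempty :=
        ⟨1, Finset.mem_insert_self _ _⟩
      refine ⟨(insert (1 : ℝ) (Finset.univ.image fun l => |c l| / (|d l| + 1))).min' hne,
        ?_, ?_⟩
      · rw [Finset.lt_min'_iff]
        intro r hr
        rcases Finset.mem_insert.mp hr with h | h
        · rw [h]; norm_num
        · obtain ⟨l, -, rfl⟩ := Finset.mem_image.mp h
          exact div_pos (abs_pos.mpr (hc0 l)) (by positivity)
      · intro l
        set E := (insert (1 : ℝ) (Finset.univ.image fun l => |c l| / (|d l| + 1))).min' hne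
          with hE
        have h1 : E ≤ |c l| / (|d l| + 1) :=
          Finset.min'_le _ _ (Finset.mem_insert_of_mem
            (Finset.mem_image.mpr ⟨l, Finset.mem_univ l, rfl⟩))
        have hpos : (0 : ℝ) < E := by
          rw [hE, Finset.lt_min'_iff]
          intro r hr
          rcases Finset.mem_insert.mp hr with h | h
          · rw [h]; norm_num
          · obtain ⟨l', -, rfl⟩ := Finset.mem_image.mp h
            exact div_pos (abs_pos.mpr (hc0 l')) (by positivity)
        have hdl : (0 : ℝ) < |d l| + 1 := by positivity
        have h2 : E * (|d l| + 1) ≤ |c l| := by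
          rw [← div_mul_cancel₀ (|c l|) (ne_of_gt hdl)]
          exact mul_le_mul_of_nonneg_right h1 (le_of_lt hdl)
        nlinarith
    have hq0 : q ≠ 0 := by
      intro h
      rw [h, abs_zero] at hqc
      linarith
    have hsq : |Real.sign q| = 1 := by
      rcases hq0.lt_or_gt with h | h
      · simp [Real.sign_of_neg h]
      · simp [Real.sign_of_pos h]
    set t : ℝ := ε * Real.sign q with ht
    have htabs : |t| = ε := by rw [ht, abs_mul, hsq, mul_one, abs_of_pos hε0]
    set a : Fin m → ℝ :=
      fun i => sparseExt σ (fun l => c l - t * d l) i + if i = i0 then t else 0 with ha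
    have hafeas : M.mulVec a = b := by
      funext j
      have h1 : M.mulVec a j
          = M.mulVec (sparseExt σ fun l => c l - t * d l) j + t * M j i0 := by
        simp only [ha, Matrix.mulVec, dotProduct, mul_add, Finset.sum_add_distrib]
        congr 1
        simp [mul_ite, mul_comm]
      rw [h1, mulVec_sparseExt]
      have h2 : ∑ l, M j (σ l) * (c l - t * d l)
          = (∑ l, MS j l * c l) - t * ∑ l, MS j l * d l := by
        simp only [hMcol]
        rw [Finset.mul_sum, ← Finset.sum_sub_distrib]
        exact Finset.sum_congr rfl fun l _ => by ring
      rw [h2, show (∑ l, MS j l * c l) = MS.mulVec c j from rfl,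
        show (∑ l, MS j l * d l) = MS.mulVec d j from rfl, hMSc, hMSd]
      ring
    have hanorm : ∑ i, |a i| = (∑ l, |c l - t * d l|) + ε := by
      have hpt : ∀ i, |a i|
          = |sparseExt σ (fun l => c l - t * d l) i| + (if i = i0 then ε else 0) := by
        intro i
        by_cases hii : i = i0
        · subst hii
          simp [ha, sparseExt_eq_zero _ hi0, htabs]
        · simp [ha, hii]
      rw [Finset.sum_congr rfl fun i _ => hpt i, Finset.sum_add_distrib,
        sum_abs_sparseExt hσ]
      congr 1
      simp
    have hterm : ∀ l, |c l - t * d l| = |c l| - t * (d l * s l) := by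
      intro l
      have hsl : |s l| = 1 := by
        rcases (hc0 l).lt_or_gt with h | h
        · simp [hs, Real.sign_of_neg h]
        · simp [hs, Real.sign_of_pos h]
      have h1 : s l * c l = |c l| := by
        rw [hs, mul_comm]
        exact real_mul_sign _
      have h2 : 0 ≤ s l * (c l - t * d l) := by
        have h3 : s l * (t * d l) ≤ |t * d l| := by
          calc s l * (t * d l) ≤ |s l * (t * d l)| := le_abs_self _
            _ = |t * d l| := by rw [abs_mul, hsl, one_mul]
        have h4 : |t * d l| < |c l| := by
          rw [abs_mul, htabs]
          exact hεlt l
        nlinarith [mul_sub (s l) (c l) (t * d l)]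
      have h5 : |c l - t * d l| = s l * (c l - t * d l) := by
        rw [← abs_of_nonneg h2, abs_mul, hsl, one_mul]
      rw [h5, mul_sub, h1]
      ring
    have hlt : ∑ i, |a i| < ∑ i, |sparseExt σ c i| := by
      rw [hanorm, sum_abs_sparseExt hσ,
        Finset.sum_congr rfl fun l _ => hterm l, Finset.sum_sub_distrib, ← Finset.mul_sum, hds]
      have htq : t * q = ε * |q| := by
        rw [ht, mul_assoc, mul_comm (Real.sign q) q, real_mul_sign]
      rw [htq]
      nlinarith
    exact absurd (hmin a hafeas) (not_le.mpr hlt)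
  · intro hbound
    refine ⟨hfeas, fun a ha => ?_⟩
    have hple : ∀ i, |∑ j, M j i * y j| ≤ 1 := by
      intro i
      by_cases hi : i ∈ Set.range σ
      · obtain ⟨l, rfl⟩ := hi
        rw [hpσ]
        exact habs_s l
      · exact hbound i hi
    calc ∑ i, |sparseExt σ c i| = ∑ j, b j * y j := hnorm0
      _ = ∑ j, (∑ i, M j i * a i) * y j := by
          refine Finset.sum_congr rfl fun j _ => ?_
          congr 1
          rw [← ha]
          rfl
      _ = ∑ i, a i * ∑ j, M j i * y j := by
          simp only [Finset.sum_mul, Finset.mul_sum]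
          rw [Finset.sum_comm]
          exact Finset.sum_congr rfl fun i _ => Finset.sum_congr rfl fun j _ => by ring
      _ ≤ ∑ i, |a i| := by
          refine Finset.sum_le_sum fun i _ => ?_
          calc a i * ∑ j, M j i * y j ≤ |a i * ∑ j, M j i * y j| := le_abs_self _
            _ = |a i| * |∑ j, M j i * y j| := abs_mul _ _
            _ ≤ |a i| * 1 := mul_le_mul_of_nonneg_left (hple i) (abs_nonneg _)
            _ = |a i| := mul_one _
end

section
/- Let M ∈ ℝ^{n×m}, b ∈ ℝ^n, and S ⊆ {1,...,m} with |S| = n be such that the submatrix M_S is invertible and ‖M_{S^c}^T M_S^{-T} sgn(M_S^{-1} b)‖_∞ ≤ 1. Then the vector a^{(S)} ∈ ℝ^m defined by a^{(S)}_S = M_S^{-1} b and a^{(S)}_i = 0 for i ∉ S satisfies ‖a^{(S)}‖₁ ≤ ‖a‖₁ for every a ∈ ℝ^m with Ma = b; in other words, a^{(S)} is a minimizer of ‖a‖₁ subject to Ma = b. -/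
open Matrix

lemma sign_mul_self_eq_abs (x : ℝ) : Real.sign x * x = |x| := by
  rcases lt_trichotomy x 0 with h | h | h
  · rw [Real.sign_of_neg h, abs_of_neg h]; ring
  · simp [h]
  · rw [Real.sign_of_pos h, abs_of_pos h]; ring

lemma abs_sign_le_one (x : ℝ) : |Real.sign x| ≤ 1 := by
  rcases lt_trichotomy x 0 with h | h | h
  · rw [Real.sign_of_neg h]; norm_num
  · simp [h]
  · rw [Real.sign_of_pos h]; norm_num

/-- if the submatrix `M_S` (columns of `M` selected by the injection `σ`)
is invertible and `‖M_{Sᶜ}ᵀ M_S⁻ᵀ sgn(M_S⁻¹ b)‖_∞ ≤ 1`, then the vector `a⁽ˢ⁾`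
supported on `S` with `a⁽ˢ⁾_S = M_S⁻¹ b` is an `ℓ¹`-minimizer subject to `Ma = b`. -/
theorem sparse_l1_minimizer_of_dual_certificate
    (n m : ℕ) (M : Matrix (Fin n) (Fin m) ℝ) (b : Fin n → ℝ)
    (σ : Fin n → Fin m) (hσ : Function.Injective σ)
    (MS : Matrix (Fin n) (Fin n) ℝ) (hMS : ∀ j l, MS j l = M j (σ l))
    (hMS_inv : IsUnit MS.det)
    (hcert : ∀ i : Fin m, i ∉ Set.range σ →
      |∑ j, M j i * ((MS⁻¹)ᵀ.mulVec fun l => Real.sign (MS⁻¹.mulVec b l)) j| ≤ 1) :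
    ∀ a : Fin m → ℝ, M.mulVec a = b →
      ∑ i, |sparseExt σ (MS⁻¹.mulVec b) i| ≤ ∑ i, |a i| := by
  intro a ha
  set c : Fin n → ℝ := MS⁻¹.mulVec b with hc
  set h : Fin n → ℝ := fun l => Real.sign (c l) with hh
  set v : Fin n → ℝ := (MS⁻¹)ᵀ.mulVec h with hv
  -- the key bound on the dual certificate
  have hbound : ∀ i, |∑ j, M j i * v j| ≤ 1 := by
    intro i
    by_cases hi : i ∈ Set.range σ
    · obtain ⟨l, rfl⟩ := hi
      have e1 : ∑ j, M j (σ l) * v j = (MSᵀ.mulVec v) l := by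
        simp [Matrix.mulVec, dotProduct, Matrix.transpose_apply, hMS]
      have e2 : MSᵀ.mulVec v = h := by
        rw [hv, Matrix.mulVec_mulVec, Matrix.transpose_nonsing_inv,
          Matrix.mul_nonsing_inv, Matrix.one_mulVec]
        simpa using hMS_inv
      rw [e1, e2]
      exact abs_sign_le_one _
    · exact hcert i hi
  -- values of the sparse vector
  have hval : ∀ l, sparseExt σ c (σ l) = c l := by
    intro l
    simp [sparseExt, hσ.eq_iff]
  have hzero : ∀ i, i ∉ Set.range σ → sparseExt σ c i = 0 := by
    intro i hi
    apply Finset.sum_eq_zero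
    intro l _
    rw [if_neg]
    exact fun e => hi ⟨l, e.symm⟩
  -- ℓ¹ norm of the sparse vector
  have step1 : ∑ i, |sparseExt σ c i| = ∑ l, |c l| := by
    rw [← Finset.sum_subset (Finset.subset_univ (Finset.univ.image σ)),
      Finset.sum_image (fun x _ y _ hxy => hσ hxy)]
    · exact Finset.sum_congr rfl fun l _ => by rw [hval]
    · intro i _ hi
      rw [hzero i, abs_zero]
      intro ⟨l, hl⟩
      exact hi (Finset.mem_image.2 ⟨l, Finset.mem_univ _, hl⟩)
  -- ∑ |c l| = h ⬝ᵥ c = v ⬝ᵥ b = (Mᵀ v) ⬝ᵥ a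
  have step2 : ∑ l, |c l| = ∑ i, (∑ j, M j i * v j) * a i := by
    have e3 : ∑ l, |c l| = h ⬝ᵥ c := by
      simp only [dotProduct, hh]
      exact Finset.sum_congr rfl fun l _ => (sign_mul_self_eq_abs _).symm
    have e4 : h ⬝ᵥ c = v ⬝ᵥ b := by
      rw [hc, hv, Matrix.dotProduct_mulVec, Matrix.mulVec_transpose]
    have e5 : v ⬝ᵥ b = ∑ i, (∑ j, M j i * v j) * a i := by
      rw [← ha, Matrix.dotProduct_mulVec]
      simp [Matrix.vecMul, dotProduct, mul_comm]
    rw [e3, e4, e5]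
  rw [step1, step2]
  calc ∑ i, (∑ j, M j i * v j) * a i ≤ ∑ i, |a i| := by
        apply Finset.sum_le_sum
        intro i _
        calc (∑ j, M j i * v j) * a i ≤ |(∑ j, M j i * v j) * a i| := le_abs_self _
          _ = |∑ j, M j i * v j| * |a i| := abs_mul _ _
          _ ≤ 1 * |a i| := by
              exact mul_le_mul_of_nonneg_right (hbound i) (abs_nonneg _)
          _ = |a i| := one_mul _
end

section
/- Let M ∈ ℝ^{n×m} and b ∈ ℝ^n be such that the affine set {a ∈ ℝ^m : Ma = b} is nonempty. Then the minimum of ‖a‖₁ over a ∈ ℝ^m subject to Ma = b is attained, and it is attained by some vector â having at most n nonzero entries. -/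
lemma l1min_abs_affine {a h s T : ℝ} (hs : 0 < s) (hT : 0 < T)
    (hroot : h ≠ 0 → T ≤ -a/h ∨ -a/h ≤ -s) :
    ∃ c : ℝ, ∀ t : ℝ, -s ≤ t → t ≤ T → |a + t*h| = |a| + t*c := by
  by_cases hh : h = 0
  · exact ⟨0, fun t _ _ => by simp [hh]⟩
  have har : a = -(-a/h) * h := by field_simp
  rcases hroot hh with hr | hr
  · rcases (lt_or_gt_of_ne hh) with hneg | hpos
    · refine ⟨h, fun t ht1 ht2 => ?_⟩
      have h1 : 0 ≤ a := by nlinarith [mul_nonneg (sub_nonneg.mpr hr) (neg_nonneg.mpr hneg.le)]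
      have h2 : 0 ≤ a + t*h := by
        nlinarith [mul_nonneg (sub_nonneg.mpr (le_trans ht2 hr)) (neg_nonneg.mpr hneg.le)]
      rw [abs_of_nonneg h2, abs_of_nonneg h1]
    · refine ⟨-h, fun t ht1 ht2 => ?_⟩
      have h1 : a ≤ 0 := by nlinarith [mul_nonneg (sub_nonneg.mpr hr) hpos.le]
      have h2 : a + t*h ≤ 0 := by
        nlinarith [mul_nonneg (sub_nonneg.mpr (le_trans ht2 hr)) hpos.le]
      rw [abs_of_nonpos h2, abs_of_nonpos h1]; ring
  · rcases (lt_or_gt_of_ne hh) with hneg | hpos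
    · refine ⟨-h, fun t ht1 ht2 => ?_⟩
      have h1 : a ≤ 0 := by
        nlinarith [mul_nonneg (neg_nonneg.mpr (le_trans hr (by linarith : -s ≤ (0:ℝ)))) (neg_nonneg.mpr hneg.le)]
      have h2 : a + t*h ≤ 0 := by
        nlinarith [mul_nonpos_of_nonneg_of_nonpos (sub_nonneg.mpr (le_trans hr ht1)) hneg.le]
      rw [abs_of_nonpos h2, abs_of_nonpos h1]; ring
    · refine ⟨h, fun t ht1 ht2 => ?_⟩
      have h1 : 0 ≤ a := by nlinarith [mul_nonneg (neg_nonneg.mpr (le_trans hr (by linarith : -s ≤ (0:ℝ)))) hpos.le]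
      have h2 : 0 ≤ a + t*h := by
        nlinarith [mul_nonneg (sub_nonneg.mpr (le_trans hr ht1)) hpos.le]
      rw [abs_of_nonneg h2, abs_of_nonneg h1]
open Finset

-- Piece 2: kernel vector supported on S
lemma l1min_exists_kernel_vec (n m : ℕ) (M : Matrix (Fin n) (Fin m) ℝ)
    (S : Finset (Fin m)) (hS : n < S.card) :
    ∃ h : Fin m → ℝ, h ≠ 0 ∧ (∀ j, j ∉ S → h j = 0) ∧ M.mulVec h = 0 := by
  classical
  have hdep : ¬ LinearIndependent ℝ (fun j : S => fun i => M i (j : Fin m)) := by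
    intro hli
    have := hli.fintype_card_le_finrank
    simp [Module.finrank_pi] at this
    omega
  obtain ⟨g, hg0, j₁, hj₁⟩ := Fintype.not_linearIndependent_iff.mp hdep
  refine ⟨fun j => if hj : j ∈ S then g ⟨j, hj⟩ else 0, ?_, ?_, ?_⟩
  · intro hzero
    apply hj₁
    have := congrFun hzero (j₁ : Fin m)
    simpa [j₁.2] using this
  · intro j hj; simp [hj]
  · funext i
    have h0 := congrFun hg0 i
    simp only [Finset.sum_apply, Pi.smul_apply, smul_eq_mul, Pi.zero_apply] at h0
    simp only [Matrix.mulVec, dotProduct, Pi.zero_apply]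
    rw [← Finset.sum_subset (Finset.subset_univ S)]
    · rw [← Finset.sum_attach S (fun j => M i j * if hj : j ∈ S then g ⟨j, hj⟩ else 0)]
      rw [← h0]
      apply Finset.sum_congr rfl
      intro j _
      simp [j.2, mul_comm]
    · intro j _ hj; simp [hj]

-- Piece 1: existence of a minimizer
lemma l1min_exists_min (n m : ℕ) (M : Matrix (Fin n) (Fin m) ℝ) (b : Fin n → ℝ)
    (hfeas : ∃ a : Fin m → ℝ, M.mulVec a = b) :
    ∃ ahat : Fin m → ℝ, M.mulVec ahat = b ∧
      ∀ a : Fin m → ℝ, M.mulVec a = b → ∑ i, |ahat i| ≤ ∑ i, |a i| := by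
  obtain ⟨a0, ha0⟩ := hfeas
  set f : (Fin m → ℝ) → ℝ := fun a => ∑ i, |a i| with hf
  have hf_cont : Continuous f := by
    apply continuous_finset_sum
    exact fun i _ => (continuous_apply i).abs
  have hmv_cont : Continuous fun a : Fin m → ℝ => M.mulVec a :=
    (M.mulVecLin : (Fin m → ℝ) →ₗ[ℝ] (Fin n → ℝ)).continuous_of_finiteDimensional
  set K : Set (Fin m → ℝ) := {a | M.mulVec a = b ∧ f a ≤ f a0} with hK
  have hKne : a0 ∈ K := ⟨ha0, le_refl _⟩
  have hKclosed : IsClosed K := by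
    apply IsClosed.inter
    · exact isClosed_eq hmv_cont continuous_const
    · exact isClosed_le hf_cont continuous_const
  have habs : ∀ a : Fin m → ℝ, ∀ i, |a i| ≤ f a := by
    intro a i
    exact Finset.single_le_sum (fun j _ => abs_nonneg (a j)) (Finset.mem_univ i)
  have hKsub : K ⊆ Metric.closedBall 0 (f a0) := by
    intro a ⟨_, hfa⟩
    rw [Metric.mem_closedBall, dist_zero_right]
    have h0 : (0:ℝ) ≤ f a0 := Finset.sum_nonneg fun i _ => abs_nonneg _
    rw [pi_norm_le_iff_of_nonneg h0]
    intro i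
    calc ‖a i‖ = |a i| := rfl
    _ ≤ f a := habs a i
    _ ≤ f a0 := hfa
  have hKcpt : IsCompact K :=
    (isCompact_closedBall 0 (f a0)).of_isClosed_subset hKclosed hKsub
  obtain ⟨ahat, hmem, hmin⟩ := hKcpt.exists_isMinOn ⟨a0, hKne⟩ hf_cont.continuousOn
  refine ⟨ahat, hmem.1, fun a ha => ?_⟩
  by_cases hfa : f a ≤ f a0
  · exact hmin ⟨ha, hfa⟩
  · have h2 : ∑ i, |ahat i| ≤ ∑ i, |a0 i| := hmin hKne
    push_neg at hfa
    linarith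

lemma l1min_sparsify (n m : ℕ) (M : Matrix (Fin n) (Fin m) ℝ) (b : Fin n → ℝ)
    (ahat : Fin m → ℝ) (hfe : M.mulVec ahat = b)
    (hmin : ∀ a : Fin m → ℝ, M.mulVec a = b → ∑ i, |ahat i| ≤ ∑ i, |a i|)
    (hcard : n < (Finset.univ.filter fun i => ahat i ≠ 0).card) :
    ∃ a' : Fin m → ℝ, M.mulVec a' = b ∧
      (∀ a : Fin m → ℝ, M.mulVec a = b → ∑ i, |a' i| ≤ ∑ i, |a i|) ∧
      (Finset.univ.filter fun i => a' i ≠ 0).card <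
        (Finset.univ.filter fun i => ahat i ≠ 0).card := by
  classical
  set S := Finset.univ.filter fun i => ahat i ≠ 0 with hSdef
  obtain ⟨h0, hh0ne, hh0supp, hh0ker⟩ := l1min_exists_kernel_vec n m M S hcard
  -- main argument, given a direction with a positive crossing time
  have main : ∀ h : Fin m → ℝ, (∀ j, j ∉ S → h j = 0) → M.mulVec h = 0 →
      (∃ j, h j ≠ 0 ∧ 0 < -ahat j / h j) →
      ∃ a' : Fin m → ℝ, M.mulVec a' = b ∧
        (∀ a : Fin m → ℝ, M.mulVec a = b → ∑ i, |a' i| ≤ ∑ i, |a i|) ∧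
        (Finset.univ.filter fun i => a' i ≠ 0).card < S.card := by
    intro h hsupp hker ⟨jw, hjw1, hjw2⟩
    have hSah : ∀ j, h j ≠ 0 → ahat j ≠ 0 := by
      intro j hj
      by_contra h0
      exact hj (hsupp j (by simp [hSdef, h0]))
    set T := Finset.univ.filter fun j => h j ≠ 0 ∧ 0 < -ahat j / h j with hTdef
    have hTne : T.Nonempty := ⟨jw, by simp [hTdef, hjw1, hjw2]⟩
    set tstar := T.inf' hTne fun j => -ahat j / h j with htsdef
    have htspos : 0 < tstar := by
      rw [htsdef, Finset.lt_inf'_iff]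
      intro j hj
      exact (Finset.mem_filter.mp hj).2.2
    obtain ⟨j₀, hj₀T, hj₀eq⟩ := Finset.exists_mem_eq_inf' hTne fun j => -ahat j / h j
    have hj₀h : h j₀ ≠ 0 := (Finset.mem_filter.mp hj₀T).2.1
    set U := Finset.univ.filter fun j => h j ≠ 0 ∧ -ahat j / h j < 0 with hUdef
    set s : ℝ := if hU : U.Nonempty then min 1 (U.inf' hU fun j => -(-ahat j / h j)) else 1
      with hsdef
    have hspos : 0 < s := by
      rw [hsdef]
      split_ifs with hU
      · apply lt_min one_pos
        rw [Finset.lt_inf'_iff]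
        intro j hj
        have := (Finset.mem_filter.mp hj).2.2
        linarith
      · exact one_pos
    have hsle : ∀ j ∈ U, -ahat j / h j ≤ -s := by
      intro j hj
      have h1 : s ≤ -(-ahat j / h j) := by
        rw [hsdef]
        split_ifs with hU
        · exact le_trans (min_le_right _ _) (Finset.inf'_le _ hj)
        · exact absurd ⟨j, hj⟩ hU
      linarith
    have hc : ∀ i, ∃ c : ℝ, ∀ t : ℝ, -s ≤ t → t ≤ tstar →
        |ahat i + t * h i| = |ahat i| + t * c := by
      intro i
      apply l1min_abs_affine hspos htspos
      intro hhi
      by_cases hpos : 0 < -ahat i / h i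
      · left
        exact Finset.inf'_le _ (by simp [hTdef, hhi, hpos])
      · right
        have hne : -ahat i / h i ≠ 0 := by
          have := hSah i hhi
          simp [div_eq_zero_iff, hhi, this]
        have hlt : -ahat i / h i < 0 := lt_of_le_of_ne (not_lt.mp hpos) hne
        exact hsle i (by simp [hUdef, hhi, hlt])
    choose c hc using hc
    have hfeast : ∀ t : ℝ, M.mulVec (fun i => ahat i + t * h i) = b := by
      intro t
      have he : (fun i => ahat i + t * h i) = ahat + t • h := by
        funext i; simp [mul_comm]
      rw [he, Matrix.mulVec_add, Matrix.mulVec_smul, hker, hfe]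
      simp
    have hslope : ∀ t : ℝ, -s ≤ t → t ≤ tstar →
        ∑ i, |ahat i + t * h i| = (∑ i, |ahat i|) + t * ∑ i, c i := by
      intro t ht1 ht2
      rw [Finset.mul_sum, ← Finset.sum_add_distrib]
      exact Finset.sum_congr rfl fun i _ => hc i t ht1 ht2
    have hge : ∀ t : ℝ, (∑ i, |ahat i|) ≤ ∑ i, |ahat i + t * h i| :=
      fun t => hmin _ (hfeast t)
    have hCeq : (∑ i, c i) = 0 := by
      have h1 := hge tstar
      rw [hslope tstar (by linarith) le_rfl] at h1
      have h2 := hge (-s)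
      rw [hslope (-s) le_rfl (by linarith)] at h2
      nlinarith
    refine ⟨fun i => ahat i + tstar * h i, hfeast tstar, ?_, ?_⟩
    · intro a ha
      rw [hslope tstar (by linarith) le_rfl, hCeq, mul_zero, add_zero]
      exact hmin a ha
    · apply Finset.card_lt_card
      constructor
      · intro i hi
        simp only [Finset.mem_filter, Finset.mem_univ, true_and] at hi ⊢
        by_contra hai
        have ha0 : ahat i = 0 := by simpa [hSdef] using hai
        have hhi : h i = 0 := hsupp i hai
        simp [ha0, hhi] at hi
      · intro hsub
        have hj₀S : j₀ ∈ S := by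
          simp [hSdef, hSah j₀ hj₀h]
        have := hsub hj₀S
        simp only [Finset.mem_filter, Finset.mem_univ, true_and] at this
        apply this
        rw [htsdef, hj₀eq]
        field_simp
        ring
  by_cases hw : ∃ j, h0 j ≠ 0 ∧ 0 < -ahat j / h0 j
  · exact main h0 hh0supp hh0ker hw
  · obtain ⟨jw, hjw⟩ := Function.ne_iff.mp hh0ne
    have hahjw : ahat jw ≠ 0 := by
      by_contra h0
      exact hjw (hh0supp jw (by simp [hSdef, h0]))
    apply main (-h0)
    · intro j hj; simp [hh0supp j hj]
    · rw [Matrix.mulVec_neg, hh0ker]; simp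
    · refine ⟨jw, by simpa using hjw, ?_⟩
      push_neg at hw
      have := hw jw (by simpa using hjw)
      have hne : -ahat jw / h0 jw ≠ 0 := by
        simp [div_eq_zero_iff, hjw, hahjw]
        intro hc; exact absurd hc hjw
      have hlt : -ahat jw / h0 jw < 0 := lt_of_le_of_ne this hne
      have : -ahat jw / (-h0 jw) = -(-ahat jw / h0 jw) := by
        rw [div_neg]
      simp only [Pi.neg_apply, this]
      linarith

/-- if the affine set `{a : Ma = b}` is nonempty, then the `ℓ¹`-minimization
program `min ‖a‖₁ s.t. Ma = b` admits a minimizer `ahat` with at most `n` nonzero entries. -/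
theorem exists_sparse_l1_minimizer
    (n m : ℕ) (M : Matrix (Fin n) (Fin m) ℝ) (b : Fin n → ℝ)
    (hfeas : ∃ a : Fin m → ℝ, M.mulVec a = b) :
    ∃ ahat : Fin m → ℝ, M.mulVec ahat = b ∧
      (∀ a : Fin m → ℝ, M.mulVec a = b → ∑ i, |ahat i| ≤ ∑ i, |a i|) ∧
      (Finset.univ.filter fun i => ahat i ≠ 0).card ≤ n := by
  classical
  have key : ∀ k : ℕ, ∀ ahat : Fin m → ℝ, M.mulVec ahat = b →
      (∀ a : Fin m → ℝ, M.mulVec a = b → ∑ i, |ahat i| ≤ ∑ i, |a i|) →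
      (Finset.univ.filter fun i => ahat i ≠ 0).card ≤ k →
      ∃ a' : Fin m → ℝ, M.mulVec a' = b ∧
        (∀ a : Fin m → ℝ, M.mulVec a = b → ∑ i, |a' i| ≤ ∑ i, |a i|) ∧
        (Finset.univ.filter fun i => a' i ≠ 0).card ≤ n := by
    intro k
    induction k with
    | zero =>
      intro ahat h1 h2 h3
      exact ⟨ahat, h1, h2, le_trans h3 (Nat.zero_le n)⟩
    | succ k ih =>
      intro ahat h1 h2 h3
      by_cases hn : (Finset.univ.filter fun i => ahat i ≠ 0).card ≤ n
      · exact ⟨ahat, h1, h2, hn⟩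
      · push_neg at hn
        obtain ⟨a', ha'1, ha'2, ha'3⟩ := l1min_sparsify n m M b ahat h1 h2 hn
        exact ih a' ha'1 ha'2 (by omega)
  obtain ⟨ahat, h1, h2⟩ := l1min_exists_min n m M b hfeas
  exact key (Finset.univ.filter fun i => ahat i ≠ 0).card ahat h1 h2 le_rfl
end

section
/- Let F be a real normed vector space, V a linear subspace of F, λ_1,...,λ_m bounded linear functionals on F with observation map Λ(f) = (λ_1(f),...,λ_m(f)) ∈ ℝ^m, Q : F → Z a bounded linear map into a real normed vector space Z, and ε > 0. Then for every (not necessarily linear) map Δ : ℝ^m → Z and every h ∈ F with Λ(h) = 0 and dist(h, V) > 0, one has sup { ‖Q(f) − Δ(Λ f)‖_Z : f ∈ F, dist(f, V) ≤ ε } ≥ ε · ‖Q(h)‖_Z / dist(h, V). -/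
/-- lower bound on the worst-case error of any recovery map `Δ` over the
approximability set `{f : dist(f, V) ≤ ε}`, coming from any `h` in the kernel of the
observation map `Λ = (λ₁, …, λ_m)` with `dist(h, V) > 0`. The (possibly infinite)
supremum is taken in `ℝ≥0∞`. -/
theorem worst_case_error_lower_bound
    (F Z : Type*) [NormedAddCommGroup F] [NormedSpace ℝ F]
    [NormedAddCommGroup Z] [NormedSpace ℝ Z]
    (V : Submodule ℝ F) (m : ℕ) (lam : Fin m → F →L[ℝ] ℝ) (Q : F →L[ℝ] Z)
    (ε : ℝ) (hε : 0 < ε) (Δ : (Fin m → ℝ) → Z)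
    (h : F) (hker : ∀ i, lam i h = 0) (hV : 0 < Metric.infDist h (V : Set F)) :
    ENNReal.ofReal (ε * ‖Q h‖ / Metric.infDist h (V : Set F)) ≤
      ⨆ f ∈ {f : F | Metric.infDist f (V : Set F) ≤ ε},
        (‖Q f - Δ (fun i => lam i f)‖₊ : ENNReal) := by
  classical
  open Pointwise in
  set d := Metric.infDist h (V : Set F) with hd
  set c : ℝ := ε / d with hc
  have hcpos : 0 < c := div_pos hε hV
  have hdist : ∀ t : ℝ, |t| = c → Metric.infDist (t • h) (V : Set F) ≤ ε := by
    intro t ht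
    have htne : t ≠ 0 := by intro h0; rw [h0] at ht; simp at ht; linarith
    have hsm := infDist_smul₀ (𝕜 := ℝ) htne (V : Set F) h
    have htc : t • (V : Set F) = (V : Set F) := by
      apply Set.Subset.antisymm
      · rintro x ⟨y, hy, rfl⟩; exact V.smul_mem t hy
      · intro x hx
        exact ⟨t⁻¹ • x, V.smul_mem _ hx, by
          simp [smul_smul, mul_inv_cancel₀ htne]⟩
    rw [htc] at hsm
    rw [hsm, Real.norm_eq_abs, ht, hc, div_mul_cancel₀ _ hV.ne']
  have key : ε * ‖Q h‖ / d = c * ‖Q h‖ := by rw [hc]; ring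
  have hlam : ∀ (t : ℝ), (fun i => lam i (t • h)) = (0 : Fin m → ℝ) := by
    intro t; funext i; simp [hker i]
  set a := Q (c • h) with ha
  set b := Δ (0 : Fin m → ℝ) with hb
  have h1 : 2 * ‖a‖ ≤ ‖a - b‖ + ‖-a - b‖ := by
    have h2 : (a - b) - (-a - b) = (2 : ℝ) • a := by
      rw [two_smul]; abel
    have := norm_sub_le (a - b) (-a - b)
    rw [h2, norm_smul] at this
    simpa using this
  have hsum : ‖a‖ ≤ max ‖a - b‖ ‖-a - b‖ := by
    rcases le_total ‖a - b‖ ‖-a - b‖ with hle | hle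
    · exact le_max_of_le_right (by linarith)
    · exact le_max_of_le_left (by linarith)
  rw [key]
  rcases le_max_iff.mp hsum with hcase | hcase
  · calc ENNReal.ofReal (c * ‖Q h‖)
        ≤ ENNReal.ofReal ‖a - b‖ := by
          apply ENNReal.ofReal_le_ofReal
          refine le_trans (le_of_eq ?_) hcase
          rw [ha, map_smul, norm_smul, Real.norm_eq_abs, abs_of_pos hcpos]
      _ = (‖Q (c • h) - Δ (fun i => lam i (c • h))‖₊ : ENNReal) := by
          rw [hlam c, ofReal_norm, enorm_eq_nnnorm, ha, hb]
      _ ≤ _ := le_iSup₂_of_le (c • h) (hdist c (abs_of_pos hcpos)) le_rfl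
  · calc ENNReal.ofReal (c * ‖Q h‖)
        ≤ ENNReal.ofReal ‖-a - b‖ := by
          apply ENNReal.ofReal_le_ofReal
          refine le_trans (le_of_eq ?_) hcase
          rw [ha, map_smul, norm_smul, Real.norm_eq_abs, abs_of_pos hcpos]
      _ = (‖Q ((-c) • h) - Δ (fun i => lam i ((-c) • h))‖₊ : ENNReal) := by
          rw [hlam (-c)]
          have hQ : Q ((-c) • h) = -a := by rw [ha, map_smul, map_smul, neg_smul]
          rw [hQ, ofReal_norm, enorm_eq_nnnorm, hb]
      _ ≤ _ := le_iSup₂_of_le ((-c) • h)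
          (hdist (-c) (by rw [abs_neg, abs_of_pos hcpos])) le_rfl
end

section
/- Let X be a compact Hausdorff space, V a finite-dimensional subspace of C(X), and x, x^1,...,x^m pairwise distinct points of X. Assume no nonzero v ∈ V satisfies v(x^1) = ... = v(x^m) = 0. Then min { ‖δ_x − Σ_{i=1}^m a_i δ_{x^i}‖_{C(X)*} : a ∈ ℝ^m, v(x) = Σ_{i=1}^m a_i v(x^i) for all v ∈ V } = sup { |h(x)| / dist(h, V) : h ∈ C(X), h ≠ 0, h(x^1) = ... = h(x^m) = 0 }, where the constraint set on the left is nonempty and the left-hand minimum is attained. -/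
open Metric

noncomputable def evalL (X : Type*) [TopologicalSpace X] [CompactSpace X] (t : X) :
    C(X, ℝ) →ₗ[ℝ] ℝ :=
  (ContinuousMap.evalCLM ℝ t : C(X, ℝ) →L[ℝ] ℝ)

@[simp] lemma evalL_apply (X : Type*) [TopologicalSpace X] [CompactSpace X] (t : X)
    (f : C(X, ℝ)) : evalL X t f = f t := rfl

lemma phi_apply_aux (X : Type*) [TopologicalSpace X] [CompactSpace X]
    (x : X) (m : ℕ) (xpt : Fin m → X) (a : Fin m → ℝ) (g : C(X, ℝ)) :
    (ContinuousMap.evalCLM ℝ x -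
        ∑ i, a i • ContinuousMap.evalCLM ℝ (xpt i) : C(X, ℝ) →L[ℝ] ℝ) g
      = g x - ∑ i, a i * g (xpt i) := by
  simp [ContinuousLinearMap.sub_apply, ContinuousLinearMap.sum_apply]

lemma infDist_pos_aux (X : Type*) [TopologicalSpace X] [CompactSpace X] [T2Space X]
    (V : Submodule ℝ C(X, ℝ)) [FiniteDimensional ℝ V]
    (m : ℕ) (xpt : Fin m → X)
    (hker : ∀ v ∈ V, (∀ i, v (xpt i) = 0) → v = 0)
    (h : C(X, ℝ)) (hh0 : h ≠ 0) (hhz : ∀ i, h (xpt i) = 0) :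
    0 < Metric.infDist h (V : Set C(X, ℝ)) := by
  have hcl : IsClosed (V : Set C(X, ℝ)) := Submodule.closed_of_finiteDimensional V
  have hne : (V : Set C(X, ℝ)).Nonempty := ⟨0, V.zero_mem⟩
  refine (hcl.notMem_iff_infDist_pos hne).1 ?_
  intro hmem
  exact hh0 (hker h hmem hhz)

lemma bound_aux (X : Type*) [TopologicalSpace X] [CompactSpace X] [T2Space X]
    (V : Submodule ℝ C(X, ℝ)) [FiniteDimensional ℝ V]
    (m : ℕ) (x : X) (xpt : Fin m → X)
    (hker : ∀ v ∈ V, (∀ i, v (xpt i) = 0) → v = 0)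
    (a' : Fin m → ℝ) (hadm : ∀ v ∈ V, v x = ∑ i, a' i * v (xpt i)) :
    ∀ t ∈ {t : ℝ | ∃ h : C(X, ℝ), h ≠ 0 ∧ (∀ i, h (xpt i) = 0) ∧
          t = |h x| / Metric.infDist h (V : Set C(X, ℝ))},
      t ≤ ‖(ContinuousMap.evalCLM ℝ x -
          ∑ i, a' i • ContinuousMap.evalCLM ℝ (xpt i) : C(X, ℝ) →L[ℝ] ℝ)‖ := by
  rintro t ⟨h, hh0, hhz, rfl⟩
  set φ : C(X, ℝ) →L[ℝ] ℝ :=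
    ContinuousMap.evalCLM ℝ x - ∑ i, a' i • ContinuousMap.evalCLM ℝ (xpt i) with hφ
  have hφh : φ h = h x := by
    rw [phi_apply_aux]
    simp [hhz]
  have hd : 0 < Metric.infDist h (V : Set C(X, ℝ)) :=
    infDist_pos_aux X V m xpt hker h hh0 hhz
  have key : |h x| ≤ ‖φ‖ * Metric.infDist h (V : Set C(X, ℝ)) := by
    have hle : ∀ v ∈ V, |h x| ≤ ‖φ‖ * dist h v := by
      intro v hv
      have hφv : φ (h - v) = h x := by
        rw [map_sub, hφh, phi_apply_aux]
        have := hadm v hv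
        simp [this]
      calc |h x| = ‖φ (h - v)‖ := by rw [hφv]; rfl
        _ ≤ ‖φ‖ * ‖h - v‖ := φ.le_opNorm _
        _ = ‖φ‖ * dist h v := by rw [dist_eq_norm]
    rcases eq_or_lt_of_le (norm_nonneg φ) with h0 | h0
    · have hφ0 : φ h = 0 := by
        have h1 := φ.le_opNorm h
        rw [← h0, zero_mul] at h1
        simpa using le_antisymm h1 (norm_nonneg _)
      rw [hφh] at hφ0
      rw [hφ0]
      simp [← h0]
    · have hne : (V : Set C(X, ℝ)).Nonempty := ⟨0, V.zero_mem⟩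
      have : |h x| / ‖φ‖ ≤ Metric.infDist h (V : Set C(X, ℝ)) := by
        by_contra hlt
        push_neg at hlt
        obtain ⟨v, hv, hdv⟩ := (Metric.infDist_lt_iff hne).1 hlt
        have h2 := hle v hv
        rw [lt_div_iff₀ h0] at hdv
        nlinarith
      calc |h x| = |h x| / ‖φ‖ * ‖φ‖ := by field_simp
        _ ≤ Metric.infDist h (V : Set C(X, ℝ)) * ‖φ‖ := by
            exact mul_le_mul_of_nonneg_right this (norm_nonneg φ)
        _ = ‖φ‖ * Metric.infDist h (V : Set C(X, ℝ)) := mul_comm _ _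
  rw [div_le_iff₀ hd]
  linarith [key]

lemma nonempty_aux (X : Type*) [TopologicalSpace X] [CompactSpace X] [T2Space X]
    (m : ℕ) (x : X) (xpt : Fin m → X) (hx : ∀ i, x ≠ xpt i) :
    ∃ h : C(X, ℝ), h ≠ 0 ∧ (∀ i, h (xpt i) = 0) ∧ h x = 1 := by
  have hs : IsClosed (Set.range xpt) := (Set.finite_range xpt).isClosed
  have hd : Disjoint (Set.range xpt) ({x} : Set X) := by
    rw [Set.disjoint_singleton_right]
    rintro ⟨i, rfl⟩
    exact hx i rfl
  obtain ⟨f, hf0, hf1, -⟩ := exists_continuous_zero_one_of_isClosed hs isClosed_singleton hd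
  refine ⟨f, ?_, fun i => hf0 ⟨i, rfl⟩, hf1 rfl⟩
  intro hf
  have : f x = 1 := hf1 rfl
  rw [hf] at this
  simp at this

lemma exists_adm (X : Type*) [TopologicalSpace X] [CompactSpace X] [T2Space X]
    (V : Submodule ℝ C(X, ℝ)) [FiniteDimensional ℝ V]
    (m : ℕ) (x : X) (xpt : Fin m → X)
    (hker : ∀ v ∈ V, (∀ i, v (xpt i) = 0) → v = 0) :
    ∃ a : Fin m → ℝ, ∀ v ∈ V, v x = ∑ i, a i * v (xpt i) := by
  classical
  let T : V →ₗ[ℝ] (Fin m → ℝ) :=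
    LinearMap.pi fun i => (evalL X (xpt i)).comp V.subtype
  have hT : LinearMap.ker T = ⊥ := by
    rw [LinearMap.ker_eq_bot']
    intro v hv
    apply Subtype.ext
    apply hker v.1 v.2
    intro i
    exact congrFun hv i
  obtain ⟨Sinv, hS⟩ := T.exists_leftInverse_of_injective hT
  let g : (Fin m → ℝ) →ₗ[ℝ] ℝ :=
    ((evalL X x).comp V.subtype).comp Sinv
  refine ⟨fun i => g (fun j => if i = j then 1 else 0), ?_⟩
  intro v hv
  have h1 : g (T ⟨v, hv⟩) = v x := by
    have h2 : Sinv (T ⟨v, hv⟩) = ⟨v, hv⟩ := LinearMap.congr_fun hS ⟨v, hv⟩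
    simp only [g, LinearMap.comp_apply, h2]
    rfl
  have h2 := LinearMap.pi_apply_eq_sum_univ g (T ⟨v, hv⟩)
  rw [h1] at h2
  rw [h2]
  refine Finset.sum_congr rfl fun i _ => ?_
  have : (T ⟨v, hv⟩) i = v (xpt i) := rfl
  rw [this, smul_eq_mul, mul_comm]

set_option maxHeartbeats 1000000

/-- the minimum of `‖δ_x - ∑ᵢ aᵢ δ_{xⁱ}‖_{C(X)*}` over the vectors `a ∈ ℝ^m`
satisfying the exactness constraint on `V` is attained (the constraint set being nonempty),
and equals `sup { |h(x)| / dist(h, V) : h ≠ 0, h(x¹) = ⋯ = h(xᵐ) = 0 }`. -/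
theorem min_dual_norm_eq_sup_ratio
    (X : Type*) [TopologicalSpace X] [CompactSpace X] [T2Space X]
    (V : Submodule ℝ C(X, ℝ)) [FiniteDimensional ℝ V]
    (m : ℕ) (x : X) (xpt : Fin m → X)
    (hxpt : Function.Injective xpt) (hx : ∀ i, x ≠ xpt i)
    (hker : ∀ v ∈ V, (∀ i, v (xpt i) = 0) → v = 0) :
    ∃ a : Fin m → ℝ,
      (∀ v ∈ V, v x = ∑ i, a i * v (xpt i)) ∧
      (∀ a' : Fin m → ℝ, (∀ v ∈ V, v x = ∑ i, a' i * v (xpt i)) →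
        ‖(ContinuousMap.evalCLM ℝ x -
            ∑ i, a i • ContinuousMap.evalCLM ℝ (xpt i) : C(X, ℝ) →L[ℝ] ℝ)‖ ≤
          ‖(ContinuousMap.evalCLM ℝ x -
              ∑ i, a' i • ContinuousMap.evalCLM ℝ (xpt i) : C(X, ℝ) →L[ℝ] ℝ)‖) ∧
      ‖(ContinuousMap.evalCLM ℝ x -
          ∑ i, a i • ContinuousMap.evalCLM ℝ (xpt i) : C(X, ℝ) →L[ℝ] ℝ)‖ =
        sSup {t : ℝ | ∃ h : C(X, ℝ), h ≠ 0 ∧ (∀ i, h (xpt i) = 0) ∧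
          t = |h x| / Metric.infDist h (V : Set C(X, ℝ))} := by
  classical
  set S : Set ℝ := {t : ℝ | ∃ h : C(X, ℝ), h ≠ 0 ∧ (∀ i, h (xpt i) = 0) ∧
      t = |h x| / Metric.infDist h (V : Set C(X, ℝ))} with hSdef
  obtain ⟨h₀, hh₀0, hh₀z, hh₀x⟩ := nonempty_aux X m x xpt hx
  have hSne : S.Nonempty := ⟨_, h₀, hh₀0, hh₀z, rfl⟩
  obtain ⟨a0, ha0⟩ := exists_adm X V m x xpt hker
  have hbdd : BddAbove S := ⟨_, bound_aux X V m x xpt hker a0 ha0⟩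
  set M := sSup S with hM
  have hM0 : 0 ≤ M := by
    have h1 : (0:ℝ) ≤ |h₀ x| / Metric.infDist h₀ (V : Set C(X, ℝ)) :=
      div_nonneg (abs_nonneg _) Metric.infDist_nonneg
    exact le_trans h1 (le_csSup hbdd ⟨h₀, hh₀0, hh₀z, rfl⟩)
  -- the subspace of functions vanishing at the points
  let W : Submodule ℝ C(X, ℝ) :=
    { carrier := {h : C(X, ℝ) | ∀ i, h (xpt i) = 0}
      add_mem' := fun ha hb i => by
        simp only [Set.mem_setOf_eq] at ha hb ⊢
        simp [ha i, hb i]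
      zero_mem' := fun i => rfl
      smul_mem' := fun c h hh i => by
        simp only [Set.mem_setOf_eq] at hh ⊢
        simp [hh i] }
  let C : (V × W) →ₗ[ℝ] C(X, ℝ) := LinearMap.coprod V.subtype W.subtype
  have hC : Function.Injective C := by
    rw [← LinearMap.ker_eq_bot, LinearMap.ker_eq_bot']
    rintro ⟨v, w⟩ hvw
    have hsum : (v : C(X, ℝ)) + (w : C(X, ℝ)) = 0 := hvw
    have hv0 : (v : C(X, ℝ)) = 0 := by
      apply hker v.1 v.2
      intro i
      have h1 : (v : C(X, ℝ)) (xpt i) + (w : C(X, ℝ)) (xpt i) = 0 := by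
        have := congrArg (fun f : C(X, ℝ) => f (xpt i)) hsum
        simpa using this
      have h2 : (w : C(X, ℝ)) (xpt i) = 0 := w.2 i
      linarith
    have hw0 : (w : C(X, ℝ)) = 0 := by
      rw [hv0, zero_add] at hsum
      exact hsum
    have hv' : v = 0 := Subtype.ext (by simp [hv0])
    have hw' : w = 0 := Subtype.ext (by simp [hw0])
    simp [Prod.ext_iff, hv', hw']
  let e := LinearEquiv.ofInjective C hC
  let L : LinearMap.range C →ₗ[ℝ] ℝ :=
    ((evalL X x).comp (W.subtype.comp (LinearMap.snd ℝ V W))).comp e.symm.toLinearMap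
  have hLval : ∀ z : V × W, L (e z) = (z.2 : C(X, ℝ)) x := by
    intro z
    simp [L, LinearEquiv.symm_apply_apply]
  have heC : ∀ z : V × W, ((e z : C(X, ℝ))) = (z.1 : C(X, ℝ)) + (z.2 : C(X, ℝ)) := fun z =>
    LinearEquiv.ofInjective_apply (f := C) z
  have hLb : ∀ y : LinearMap.range C, ‖L y‖ ≤ M * ‖y‖ := by
    rintro ⟨y, hy⟩
    obtain ⟨z, rfl⟩ := hy
    have hy2 : (⟨C z, ⟨z, rfl⟩⟩ : LinearMap.range C) = e z := Subtype.ext (heC z).symm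
    rw [hy2, hLval]
    have hn : ‖(e z : LinearMap.range C)‖ = ‖(z.1 : C(X, ℝ)) + (z.2 : C(X, ℝ))‖ := by
      have h1 : ‖(e z : LinearMap.range C)‖ = ‖((e z : LinearMap.range C) : C(X, ℝ))‖ := rfl
      rw [h1, heC z]
    rw [hn]
    obtain ⟨v, w⟩ := z
    rcases eq_or_ne (w : C(X, ℝ)) 0 with hw0 | hw0
    · simp only [hw0]
      simp
      exact mul_nonneg hM0 (norm_nonneg _)
    · have hd : 0 < Metric.infDist (w : C(X, ℝ)) (V : Set C(X, ℝ)) :=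
        infDist_pos_aux X V m xpt hker w hw0 w.2
      have htS : |(w : C(X, ℝ)) x| / Metric.infDist (w : C(X, ℝ)) (V : Set C(X, ℝ)) ∈ S :=
        ⟨w, hw0, w.2, rfl⟩
      have hle := le_csSup hbdd htS
      have h1 : |(w : C(X, ℝ)) x| ≤ M * Metric.infDist (w : C(X, ℝ)) (V : Set C(X, ℝ)) := by
        rw [← div_le_iff₀ hd] at *
        exact hle
      have h2 : Metric.infDist (w : C(X, ℝ)) (V : Set C(X, ℝ)) ≤
          ‖(v : C(X, ℝ)) + (w : C(X, ℝ))‖ := by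
        have h3 : Metric.infDist (w : C(X, ℝ)) (V : Set C(X, ℝ)) ≤ dist (w : C(X, ℝ)) (-v) :=
          Metric.infDist_le_dist_of_mem (by simp [V.neg_mem v.2])
        rw [dist_eq_norm] at h3
        calc Metric.infDist (w : C(X, ℝ)) (V : Set C(X, ℝ))
            ≤ ‖(w : C(X, ℝ)) - -(v : C(X, ℝ))‖ := h3
          _ = ‖(v : C(X, ℝ)) + (w : C(X, ℝ))‖ := by rw [sub_neg_eq_add, add_comm]
      calc ‖(w : C(X, ℝ)) x‖ = |(w : C(X, ℝ)) x| := rfl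
        _ ≤ M * Metric.infDist (w : C(X, ℝ)) (V : Set C(X, ℝ)) := h1
        _ ≤ M * ‖(v : C(X, ℝ)) + (w : C(X, ℝ))‖ := by
            exact mul_le_mul_of_nonneg_left h2 hM0
  obtain ⟨Ψ, hΨext, hΨnorm⟩ :=
    exists_extension_norm_eq (E := C(X, ℝ)) (LinearMap.range C) (L.mkContinuous M hLb)
  have hΨle : ‖Ψ‖ ≤ M := hΨnorm.le.trans (ContinuousLinearMap.opNorm_le_bound _ hM0 hLb)
  have hΨW : ∀ h : C(X, ℝ), (∀ i, h (xpt i) = 0) → Ψ h = h x := by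
    intro h hh
    have h1 := hΨext (e (0, ⟨h, hh⟩))
    have h2 : L.mkContinuous M hLb (e (0, ⟨h, hh⟩)) = h x := by
      show L (e (0, ⟨h, hh⟩)) = h x
      exact hLval (0, ⟨h, hh⟩)
    rw [h2] at h1
    rw [← h1]
    congr 1
    rw [heC (0, ⟨h, hh⟩)]
    simp
  have hΨV : ∀ v ∈ V, Ψ v = 0 := by
    intro v hv
    have h1 := hΨext (e (⟨v, hv⟩, 0))
    have h2 : L.mkContinuous M hLb (e (⟨v, hv⟩, 0)) = 0 := by
      show L (e (⟨v, hv⟩, 0)) = 0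
      have := hLval (⟨v, hv⟩, 0)
      simpa using this
    rw [h2] at h1
    rw [← h1]
    congr 1
    rw [heC (⟨v, hv⟩, 0)]
    simp
  -- the functional G = δ_x - Ψ vanishes on W, hence is a combination of the δ_{xⁱ}
  let G : C(X, ℝ) →ₗ[ℝ] ℝ := evalL X x - (Ψ : C(X, ℝ) →ₗ[ℝ] ℝ)
  have hGker : (⨅ i, LinearMap.ker (evalL X (xpt i))) ≤ LinearMap.ker G := by
    intro h hh
    simp only [Submodule.mem_iInf, LinearMap.mem_ker, evalL_apply] at hh
    simp only [LinearMap.mem_ker, G, LinearMap.sub_apply, ContinuousLinearMap.coe_coe,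
      evalL_apply]
    rw [hΨW h hh, sub_self]
  have hspan : G ∈ Submodule.span ℝ (Set.range fun i => evalL X (xpt i)) :=
    mem_span_of_iInf_ker_le_ker hGker
  obtain ⟨b, hb⟩ := (Submodule.mem_span_range_iff_exists_fun ℝ).1 hspan
  -- pointwise identity : φ_b g = Ψ g
  have hkey : ∀ g : C(X, ℝ),
      (ContinuousMap.evalCLM ℝ x -
        ∑ i, b i • ContinuousMap.evalCLM ℝ (xpt i) : C(X, ℝ) →L[ℝ] ℝ) g = Ψ g := by
    intro g
    have h1 := LinearMap.congr_fun hb g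
    simp only [LinearMap.coe_sum, Finset.sum_apply, LinearMap.smul_apply, evalL_apply,
      smul_eq_mul, G, LinearMap.sub_apply, ContinuousLinearMap.coe_coe] at h1
    rw [phi_apply_aux]
    linarith [h1]
  have hadm : ∀ v ∈ V, v x = ∑ i, b i * v (xpt i) := by
    intro v hv
    have h1 := hkey v
    rw [phi_apply_aux, hΨV v hv] at h1
    linarith [h1]
  have hle : ‖(ContinuousMap.evalCLM ℝ x -
      ∑ i, b i • ContinuousMap.evalCLM ℝ (xpt i) : C(X, ℝ) →L[ℝ] ℝ)‖ ≤ M := by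
    refine ContinuousLinearMap.opNorm_le_bound _ hM0 fun g => ?_
    rw [hkey g]
    calc ‖Ψ g‖ ≤ ‖Ψ‖ * ‖g‖ := Ψ.le_opNorm _
      _ ≤ M * ‖g‖ := mul_le_mul_of_nonneg_right hΨle (norm_nonneg _)
  have hge : M ≤ ‖(ContinuousMap.evalCLM ℝ x -
      ∑ i, b i • ContinuousMap.evalCLM ℝ (xpt i) : C(X, ℝ) →L[ℝ] ℝ)‖ :=
    csSup_le hSne (bound_aux X V m x xpt hker b hadm)
  refine ⟨b, hadm, ?_, le_antisymm hle hge⟩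
  intro a' hadm'
  exact le_trans hle (csSup_le hSne (bound_aux X V m x xpt hker a' hadm'))
end

section
/- Let M ∈ ℝ^{n×m} be a matrix of rank n (i.e., the linear map a ↦ Ma from ℝ^m to ℝ^n is surjective). Let (b_k) be a sequence in ℝ^n converging to b ∈ ℝ^n, and for each k let a_k ∈ ℝ^m be a minimizer of ‖a‖₁ subject to Ma = b_k. If the sequence (a_k) converges to ā ∈ ℝ^m, then ā is a minimizer of ‖a‖₁ subject to Ma = b. -/
/-- if `M` has full rank `n`, `b_k → b`, each `a_k` is an `ℓ¹`-minimizer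
subject to `M a = b_k`, and `a_k → ā`, then `ā` is an `ℓ¹`-minimizer subject to `M a = b`. -/
theorem limit_of_l1_minimizers_is_minimizer
    (n m : ℕ) (M : Matrix (Fin n) (Fin m) ℝ)
    (hrank : Function.Surjective M.mulVec)
    (bseq : ℕ → Fin n → ℝ) (b : Fin n → ℝ)
    (hb : Filter.Tendsto bseq Filter.atTop (nhds b))
    (aseq : ℕ → Fin m → ℝ)
    (haseq : ∀ k, M.mulVec (aseq k) = bseq k ∧
      ∀ a : Fin m → ℝ, M.mulVec a = bseq k → ∑ i, |aseq k i| ≤ ∑ i, |a i|)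
    (abar : Fin m → ℝ)
    (ha : Filter.Tendsto aseq Filter.atTop (nhds abar)) :
    M.mulVec abar = b ∧
      ∀ a : Fin m → ℝ, M.mulVec a = b → ∑ i, |abar i| ≤ ∑ i, |a i| := by
  have hcont : Continuous M.mulVec := M.mulVecLin.continuous_of_finiteDimensional
  have h1 : Filter.Tendsto (fun k => M.mulVec (aseq k)) Filter.atTop (nhds (M.mulVec abar)) :=
    (hcont.tendsto abar).comp ha
  have h2 : (fun k => M.mulVec (aseq k)) = bseq := funext fun k => (haseq k).1
  have hMb : M.mulVec abar = b := tendsto_nhds_unique (h2 ▸ h1) hb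
  refine ⟨hMb, fun a haM => ?_⟩
  have hsurj : Function.Surjective M.mulVecLin := by
    exact hrank
  obtain ⟨g, hg⟩ := M.mulVecLin.exists_rightInverse_of_surjective
    (LinearMap.range_eq_top.2 hsurj)
  have hgc : Continuous g := g.continuous_of_finiteDimensional
  have hnorm : Continuous (fun v : Fin m → ℝ => ∑ i, |v i|) := by
    apply continuous_finset_sum
    intro i _
    exact (continuous_apply i).abs
  have key : ∀ k, ∑ i, |aseq k i| ≤ ∑ i, |(a + g (bseq k - b)) i| := by
    intro k
    apply (haseq k).2
    have hgk : M.mulVecLin (g (bseq k - b)) = bseq k - b := LinearMap.congr_fun hg _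
    have : M.mulVec (a + g (bseq k - b)) = b + (bseq k - b) := by
      rw [Matrix.mulVec_add, haM, ← Matrix.mulVecLin_apply, hgk]
    simpa using this
  have t1 : Filter.Tendsto (fun k => ∑ i, |aseq k i|) Filter.atTop (nhds (∑ i, |abar i|)) :=
    (hnorm.tendsto abar).comp ha
  have t2 : Filter.Tendsto (fun k => ∑ i, |(a + g (bseq k - b)) i|) Filter.atTop
      (nhds (∑ i, |a i|)) := by
    have hd : Filter.Tendsto (fun k => bseq k - b) Filter.atTop (nhds 0) := by
      simpa using hb.sub (tendsto_const_nhds (x := b))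
    have hg0 : Filter.Tendsto (fun k => g (bseq k - b)) Filter.atTop (nhds 0) := by
      simpa only [Function.comp_def, g.map_zero] using (hgc.tendsto 0).comp hd
    have hgb : Filter.Tendsto (fun k => a + g (bseq k - b)) Filter.atTop (nhds a) := by
      simpa using (tendsto_const_nhds (x := a)).add hg0
    exact (hnorm.tendsto a).comp hgb
  exact le_of_tendsto_of_tendsto' t1 t2 key
end

section
/- Let V be an n-dimensional Chebyshev subspace of C([-1,1]) with n ≥ 3 that contains the constant functions, let x^1,...,x^m be distinct points of [-1,1] with m ≥ n, and let k ∈ {1,...,m}. Suppose ā ∈ ℝ^m is a minimizer of ‖a‖₁ subject to the constraint Σ_{i=1}^m a_i v(x^i) = v(x^k) for all v ∈ V, and that ā is supported on an index set S ⊆ {1,...,m} with |S| = n. Then k ∈ S and ā = e_k, the k-th standard basis vector of ℝ^m. -/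
lemma adj_pair (F : Finset ℝ) (h2 : 2 ≤ F.card) :
    ∃ u ∈ F, ∃ v ∈ F, u < v ∧ ∀ w ∈ F, w ∉ Set.Ioo u v := by
  have hne : F.Nonempty := Finset.card_pos.mp (by omega)
  have huF : F.min' hne ∈ F := F.min'_mem hne
  have hne2 : (F.erase (F.min' hne)).Nonempty := by
    rw [← Finset.card_pos, Finset.card_erase_of_mem huF]; omega
  set u := F.min' hne with hu
  set v := (F.erase u).min' hne2 with hv
  have hvE : v ∈ F.erase u := Finset.min'_mem _ _
  have hvF : v ∈ F := Finset.mem_of_mem_erase hvE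
  have hvne : v ≠ u := Finset.ne_of_mem_erase hvE
  refine ⟨u, huF, v, hvF, lt_of_le_of_ne (F.min'_le v hvF) (Ne.symm hvne), ?_⟩
  intro w hw hmem
  obtain ⟨h1, h2'⟩ := hmem
  have hwE : w ∈ F.erase u := Finset.mem_erase.mpr ⟨ne_of_gt h1, hw⟩
  exact absurd (Finset.min'_le _ w hwE) (not_le.mpr h2')



/-- for a Chebyshev space `V` of dimension `n ≥ 3` containing the constants,
any `ℓ¹`-minimizer `ā` of the program with data `b(x^k)` that is supported on an index set
`S` of size `n` must satisfy `k ∈ S` and `ā = e_k`. -/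
theorem sparse_minimizer_at_sample_point_is_ek
    (n m : ℕ) (hn : 3 ≤ n) (hm : n ≤ m)
    (V : Submodule ℝ C(Set.Icc (-1 : ℝ) 1, ℝ))
    (hCheb : IsChebyshev n V)
    (hconst : ∀ c : ℝ, ContinuousMap.const (Set.Icc (-1 : ℝ) 1) c ∈ V)
    (xpt : Fin m → Set.Icc (-1 : ℝ) 1) (hxpt : Function.Injective xpt)
    (k : Fin m) (abar : Fin m → ℝ)
    (hfeas : ∀ v ∈ V, v (xpt k) = ∑ i, abar i * v (xpt i))
    (hmin : ∀ a : Fin m → ℝ, (∀ v ∈ V, v (xpt k) = ∑ i, a i * v (xpt i)) →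
      ∑ i, |abar i| ≤ ∑ i, |a i|)
    (S : Finset (Fin m)) (hS : S.card = n)
    (hsupp : ∀ i ∉ S, abar i = 0) :
    k ∈ S ∧ abar = fun i => if i = k then 1 else 0 := by
  classical
  obtain ⟨-, hcheb⟩ := hCheb
  -- e_k is feasible, so the ℓ¹-norm of abar is at most 1
  have hek : ∀ v ∈ V, v (xpt k) = ∑ i, (if i = k then (1:ℝ) else 0) * v (xpt i) := by
    intro v hv
    simp [ite_mul]
  have hnorm : ∑ i, |abar i| ≤ 1 := by
    have h := hmin _ hek
    calc ∑ i, |abar i| ≤ ∑ i, |if i = k then (1:ℝ) else 0| := h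
    _ = 1 := by simp [apply_ite]
  set T : Finset (Fin m) := S.filter (fun i => abar i ≠ 0) with hTdef
  have hTsub : T ⊆ S := Finset.filter_subset _ _
  have hsupp' : ∀ i ∉ T, abar i = 0 := by
    intro i hi
    by_contra h
    exact hi (Finset.mem_filter.mpr ⟨by_contra fun hS' => h (hsupp i hS'), h⟩)
  by_cases hcase : (insert k T).card ≤ n
  · -- easy case: interpolate indicator of k on a superset of T ∪ {k}
    obtain ⟨F, hsubF, -, hFcard⟩ := Finset.exists_subsuperset_card_eq
      (Finset.subset_univ (insert k T)) hcase (by simpa using hm)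
    have hkF : k ∈ F := hsubF (Finset.mem_insert_self k T)
    set e : Fin n ≃ F := (Finset.equivFinOfCardEq hFcard).symm with he
    have hξ : Function.Injective (fun i => xpt (e i)) :=
      hxpt.comp (Subtype.val_injective.comp e.injective)
    obtain ⟨v, ⟨hvV, hvγ⟩, -⟩ := hcheb _ hξ (fun i => if ((e i : F) : Fin m) = k then 1 else 0)
    have hvF : ∀ j, (hj : j ∈ F) → v (xpt j) = if j = k then 1 else 0 := by
      intro j hj
      have h := hvγ (e.symm ⟨j, hj⟩)
      simpa using h
    have h1 : abar k = 1 := by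
      have h := hfeas v hvV
      rw [hvF k hkF, if_pos rfl] at h
      have hsum : ∑ i, abar i * v (xpt i) = abar k := by
        rw [← Finset.sum_subset (Finset.subset_univ {k})]
        · simp [hvF k hkF]
        · intro i _ hik
          rw [Finset.mem_singleton] at hik
          by_cases hz : abar i = 0
          · simp [hz]
          · have hiT : i ∈ T := by
              by_contra hiT; exact hz (hsupp' i hiT)
            rw [hvF i (hsubF (Finset.mem_insert_of_mem hiT)), if_neg hik, mul_zero]
      rw [hsum] at h
      exact h.symm
    have hrest : ∀ i, i ≠ k → abar i = 0 := by
      intro i hik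
      have hsplit : |abar k| + ∑ j ∈ Finset.univ.erase k, |abar j| = ∑ j, |abar j| :=
        Finset.add_sum_erase _ (fun j => |abar j|) (Finset.mem_univ k)
      have h0 : ∑ j ∈ Finset.univ.erase k, |abar j| ≤ 0 := by
        rw [h1, abs_one] at hsplit; linarith
      have : |abar i| = 0 := by
        have hnn : ∀ j ∈ Finset.univ.erase k, (0:ℝ) ≤ |abar j| := fun j _ => abs_nonneg _
        have := (Finset.sum_eq_zero_iff_of_nonneg hnn).mp (le_antisymm h0 (Finset.sum_nonneg hnn))
        exact this i (Finset.mem_erase.mpr ⟨hik, Finset.mem_univ i⟩)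
      exact abs_eq_zero.mp this
    constructor
    · by_contra hkS
      rw [hsupp k hkS] at h1; norm_num at h1
    · funext i
      by_cases hik : i = k
      · simp [hik, h1]
      · simp [hik, hrest i hik]
  · -- hard case: T = S, k ∉ S, and abar is a strictly positive probability vector on S
    exfalso
    have hTcard : T.card ≤ n := hS ▸ Finset.card_le_card hTsub
    have hkT : k ∉ T := by
      intro hkT
      rw [Finset.insert_eq_self.mpr hkT] at hcase
      exact hcase hTcard
    have hTeq : T = S := by
      apply Finset.eq_of_subset_of_card_le hTsub
      rw [hS]
      rw [Finset.card_insert_of_notMem hkT] at hcase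
      omega
    have hkS : k ∉ S := hTeq ▸ hkT
    have hSnz : ∀ j ∈ S, abar j ≠ 0 := by
      intro j hj
      rw [← hTeq] at hj
      exact (Finset.mem_filter.mp hj).2
    -- abar sums to 1 (testing against the constant function 1)
    have hsum1 : (1 : ℝ) = ∑ i, abar i := by
      have h := hfeas _ (hconst 1)
      simpa using h
    -- abar is nonnegative
    have hnonneg : ∀ i, 0 ≤ abar i := by
      have h1 : ∑ i, (|abar i| - abar i) ≤ 0 := by
        rw [Finset.sum_sub_distrib]
        linarith
      have hnn : ∀ i ∈ Finset.univ, (0:ℝ) ≤ |abar i| - abar i :=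
        fun i _ => sub_nonneg.mpr (le_abs_self _)
      have h2 := (Finset.sum_eq_zero_iff_of_nonneg hnn).mp
        (le_antisymm h1 (Finset.sum_nonneg hnn))
      intro i
      have := h2 i (Finset.mem_univ i)
      have habs : |abar i| = abar i := by linarith
      rw [← habs]
      exact abs_nonneg _
    have hpos : ∀ j ∈ S, 0 < abar j :=
      fun j hj => lt_of_le_of_ne (hnonneg j) (Ne.symm (hSnz j hj))
    -- find an adjacent pair a < b in S with nothing of S ∪ {xpt k} strictly between
    set t : ℝ := (xpt k : ℝ) with ht
    have hinj' : Function.Injective (fun j : Fin m => (xpt j : ℝ)) :=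
      Subtype.val_injective.comp hxpt
    have hne_t : ∀ j ∈ S, (xpt j : ℝ) ≠ t := by
      intro j hj heq
      exact hkS ((hxpt (Subtype.ext heq)) ▸ hj)
    obtain ⟨a, haS, b, hbS, hab, hfree, htfree⟩ :
        ∃ a ∈ S, ∃ b ∈ S, ((xpt a : ℝ) < (xpt b : ℝ)) ∧
          (∀ j ∈ S, ((xpt j : ℝ)) ∉ Set.Ioo (xpt a : ℝ) (xpt b : ℝ)) ∧
          t ∉ Set.Ioo (xpt a : ℝ) (xpt b : ℝ) := by
      set Bp := S.filter (fun j => t < (xpt j : ℝ)) with hBp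
      set Bm := S.filter (fun j => (xpt j : ℝ) < t) with hBm
      have hside : 2 ≤ Bp.card ∨ 2 ≤ Bm.card := by
        by_contra hcon
        push_neg at hcon
        have hsub : S ⊆ Bp ∪ Bm := by
          intro j hj
          rcases lt_or_gt_of_ne (hne_t j hj) with h | h
          · exact Finset.mem_union_right _ (Finset.mem_filter.mpr ⟨hj, h⟩)
          · exact Finset.mem_union_left _ (Finset.mem_filter.mpr ⟨hj, h⟩)
        have h1 := Finset.card_le_card hsub
        have h2 := Finset.card_union_le Bp Bm
        omega
      rcases hside with hside | hside
      · -- two points above t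
        obtain ⟨u, hu, v, hv, huv, hfree'⟩ := adj_pair (Bp.image (fun j => (xpt j : ℝ)))
          (by rwa [Finset.card_image_of_injective _ hinj'])
        obtain ⟨a, haBp, hua⟩ := Finset.mem_image.mp hu
        obtain ⟨b, hbBp, hvb⟩ := Finset.mem_image.mp hv
        subst hua; subst hvb
        have hta := (Finset.mem_filter.mp haBp).2
        refine ⟨a, (Finset.mem_filter.mp haBp).1, b, (Finset.mem_filter.mp hbBp).1, huv, ?_, ?_⟩
        · intro j hj hmem
          rcases lt_or_gt_of_ne (hne_t j hj) with h | h
          · exact absurd hmem.1 (not_lt.mpr (le_of_lt (lt_trans h hta)))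
          · exact hfree' _ (Finset.mem_image_of_mem _ (Finset.mem_filter.mpr ⟨hj, h⟩)) hmem
        · intro hmem
          exact absurd hmem.1 (not_lt.mpr (le_of_lt hta))
      · -- two points below t
        obtain ⟨u, hu, v, hv, huv, hfree'⟩ := adj_pair (Bm.image (fun j => (xpt j : ℝ)))
          (by rwa [Finset.card_image_of_injective _ hinj'])
        obtain ⟨a, haBm, hua⟩ := Finset.mem_image.mp hu
        obtain ⟨b, hbBm, hvb⟩ := Finset.mem_image.mp hv
        subst hua; subst hvb
        have htb := (Finset.mem_filter.mp hbBm).2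
        refine ⟨a, (Finset.mem_filter.mp haBm).1, b, (Finset.mem_filter.mp hbBm).1, huv, ?_, ?_⟩
        · intro j hj hmem
          rcases lt_or_gt_of_ne (hne_t j hj) with h | h
          · exact hfree' _ (Finset.mem_image_of_mem _ (Finset.mem_filter.mpr ⟨hj, h⟩)) hmem
          · exact absurd hmem.2 (not_lt.mpr (le_of_lt (lt_trans htb h)))
        · intro hmem
          exact absurd hmem.2 (not_lt.mpr (le_of_lt htb))
    have hab_ne : a ≠ b := fun h => absurd (h ▸ hab) (lt_irrefl _)
    -- interpolate on S the values (abar a)⁻¹ at a, -(abar b)⁻¹ at b, 0 elsewhere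
    set eS : Fin n ≃ S := (Finset.equivFinOfCardEq hS).symm with heS
    have hξ2 : Function.Injective (fun i => xpt (eS i)) :=
      hxpt.comp (Subtype.val_injective.comp eS.injective)
    obtain ⟨w, ⟨hwV, hwγ⟩, -⟩ := hcheb _ hξ2
      (fun i => if ((eS i : S) : Fin m) = a then (abar a)⁻¹
        else if ((eS i : S) : Fin m) = b then -(abar b)⁻¹ else 0)
    have hwS : ∀ j, (hj : j ∈ S) →
        w (xpt j) = if j = a then (abar a)⁻¹ else if j = b then -(abar b)⁻¹ else 0 := by
      intro j hj
      have h := hwγ (eS.symm ⟨j, hj⟩)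
      simpa using h
    -- w vanishes at xpt k
    have hw0 : w (xpt k) = 0 := by
      rw [hfeas w hwV]
      have hstep : ∑ i, abar i * w (xpt i) = ∑ i ∈ ({a, b} : Finset (Fin m)), abar i * w (xpt i) := by
        symm
        apply Finset.sum_subset (Finset.subset_univ _)
        intro i _ hiab
        simp only [Finset.mem_insert, Finset.mem_singleton, not_or] at hiab
        by_cases hiS : i ∈ S
        · rw [hwS i hiS, if_neg hiab.1, if_neg hiab.2, mul_zero]
        · rw [hsupp i hiS, zero_mul]
      rw [hstep, Finset.sum_pair hab_ne, hwS a haS, hwS b hbS, if_pos rfl,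
        if_neg hab_ne.symm, if_pos rfl, mul_inv_cancel₀ (hSnz a haS), mul_neg,
        mul_inv_cancel₀ (hSnz b hbS)]
      ring
    -- intermediate value: w vanishes at some z strictly between xpt a and xpt b
    set g : ℝ → ℝ := fun r => w (Set.projIcc (-1) 1 (by norm_num) r) with hg
    have hgc : Continuous g := w.continuous.comp (continuous_projIcc)
    have hga : g ((xpt a : ℝ)) = (abar a)⁻¹ := by
      rw [hg]
      simp only [Set.projIcc_val]
      rw [hwS a haS, if_pos rfl]
    have hgb : g ((xpt b : ℝ)) = -(abar b)⁻¹ := by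
      rw [hg]
      simp only [Set.projIcc_val]
      rw [hwS b hbS, if_neg hab_ne.symm, if_pos rfl]
    have h0mem : (0:ℝ) ∈ Set.Ioo (g (xpt b : ℝ)) (g (xpt a : ℝ)) := by
      rw [hga, hgb]
      constructor
      · simpa using inv_pos.mpr (hpos b hbS)
      · exact inv_pos.mpr (hpos a haS)
    obtain ⟨z, hzIoo, hgz⟩ := intermediate_value_Ioo' (le_of_lt hab) hgc.continuousOn h0mem
    have hzIcc : z ∈ Set.Icc (-1:ℝ) 1 :=
      ⟨le_trans (xpt a).2.1 (le_of_lt hzIoo.1), le_trans (le_of_lt hzIoo.2) (xpt b).2.2⟩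
    set zpt : Set.Icc (-1:ℝ) 1 := ⟨z, hzIcc⟩ with hzpt
    have hwzpt : w zpt = 0 := by
      rw [← hgz, hg]
      congr 1
      exact (Set.projIcc_of_mem _ hzIcc).symm
    -- collect n distinct zeros of w : the points of S minus {a,b}, plus xpt k, plus zpt
    set E : Finset (Fin m) := insert k ((S.erase a).erase b) with hE
    have hEcard : E.card = n - 1 := by
      have hbmem : b ∈ S.erase a := Finset.mem_erase.mpr ⟨hab_ne.symm, hbS⟩
      have hkE : k ∉ (S.erase a).erase b := fun h =>
        hkS (Finset.mem_of_mem_erase (Finset.mem_of_mem_erase h))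
      rw [hE, Finset.card_insert_of_notMem hkE, Finset.card_erase_of_mem hbmem,
        Finset.card_erase_of_mem haS, hS]
      omega
    have hzne : ∀ j ∈ E, xpt j ≠ zpt := by
      intro j hj heq
      have hzj : (xpt j : ℝ) = z := congrArg Subtype.val heq
      rcases Finset.mem_insert.mp hj with rfl | hj'
      · apply htfree; rw [ht, hzj]; exact hzIoo
      · apply hfree j (Finset.mem_of_mem_erase (Finset.mem_of_mem_erase hj'))
        rw [hzj]; exact hzIoo
    set Z : Finset (Set.Icc (-1:ℝ) 1) := insert zpt (E.image xpt) with hZ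
    have hZcard : Z.card = n := by
      have hznotin : zpt ∉ E.image xpt := by
        intro hmem
        obtain ⟨j, hj, hje⟩ := Finset.mem_image.mp hmem
        exact hzne j hj hje
      rw [hZ, Finset.card_insert_of_notMem hznotin, Finset.card_image_of_injective _ hxpt,
        hEcard]
      omega
    set eZ : Fin n ≃ Z := (Finset.equivFinOfCardEq hZcard).symm with heZ
    have hζinj : Function.Injective (fun i => ((eZ i : Z) : Set.Icc (-1:ℝ) 1)) :=
      Subtype.val_injective.comp eZ.injective
    have hwz0 : ∀ p ∈ Z, w p = 0 := by
      intro p hp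
      rcases Finset.mem_insert.mp hp with rfl | hp'
      · exact hwzpt
      · obtain ⟨j, hj, rfl⟩ := Finset.mem_image.mp hp'
        rcases Finset.mem_insert.mp hj with rfl | hj'
        · exact hw0
        · have hjb : j ≠ b := (Finset.mem_erase.mp hj').1
          have hja : j ≠ a := (Finset.mem_erase.mp (Finset.mem_of_mem_erase hj')).1
          have hjS : j ∈ S := Finset.mem_of_mem_erase (Finset.mem_of_mem_erase hj')
          rw [hwS j hjS, if_neg hja, if_neg hjb]
    obtain ⟨v0, -, huniq⟩ := hcheb _ hζinj 0
    have hweq : w = v0 := huniq w ⟨hwV, fun i => hwz0 _ (eZ i).2⟩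
    have h0eq : (0 : C(Set.Icc (-1:ℝ) 1, ℝ)) = v0 := huniq 0 ⟨V.zero_mem, fun i => rfl⟩
    have hcontra : w (xpt a) = 0 := by
      rw [hweq, ← h0eq]
      rfl
    rw [hwS a haS, if_pos rfl] at hcontra
    exact (inv_ne_zero (hSnz a haS)) hcontra
end

section
/- Let V be an n-dimensional Chebyshev subspace of C([-1,1]) with n ≥ 3, let ξ^1 < ξ^2 < ... < ξ^n be points of [-1,1], and for each i ∈ {1,...,n} let L_i be the unique element of V satisfying L_i(ξ^j) = δ_{i,j} for all j ∈ {1,...,n}. Then for every x ∈ [-1,1] with x ∉ {ξ^1,...,ξ^n}, the sequence (L_1(x),...,L_n(x)) does not keep a constant sign: there exist indices i and j with L_i(x) > 0 and L_j(x) < 0. -/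
/-- Strict monotonicity of a map on `Fin n` from comparisons of successive values. -/
lemma lagrange_sm_helper {α : Type*} [Preorder α] {n : ℕ} (f : Fin n → α)
    (h : ∀ i : ℕ, ∀ hi : i + 1 < n, f ⟨i, by omega⟩ < f ⟨i + 1, hi⟩) : StrictMono f := by
  cases n with
  | zero => intro a; exact absurd a.2 (by omega)
  | succ m =>
    refine Fin.strictMono_iff_lt_succ.mpr fun i => ?_
    exact h i.1 (by omega)

set_option maxHeartbeats 1000000 in
/-- for a Chebyshev space of dimension `n ≥ 3` and ordered points
`ξ¹ < ⋯ < ξⁿ`, at any `x` outside `{ξ¹, …, ξⁿ}` the values of the fundamental Lagrange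
interpolators `(L₁(x), …, Lₙ(x))` do not keep a constant sign. -/
theorem lagrange_values_change_sign
    (n : ℕ) (hn : 3 ≤ n)
    (V : Submodule ℝ C(Set.Icc (-1 : ℝ) 1, ℝ))
    (hCheb : IsChebyshev n V)
    (ξ : Fin n → Set.Icc (-1 : ℝ) 1) (hξ : StrictMono ξ)
    (L : Fin n → C(Set.Icc (-1 : ℝ) 1, ℝ))
    (hL_mem : ∀ i, L i ∈ V)
    (hL_interp : ∀ i j, L i (ξ j) = if i = j then 1 else 0) :
    ∀ x : Set.Icc (-1 : ℝ) 1, x ∉ Set.range ξ →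
      ∃ i j : Fin n, 0 < L i x ∧ L j x < 0 := by
  classical
  intro x hx
  have hxne : ∀ j, ξ j ≠ x := fun j h => hx ⟨j, h⟩
  set D : (Fin n → Set.Icc (-1 : ℝ) 1) → ℝ :=
    fun t => (Matrix.of fun i j => L i (t j)).det with hDdef
  -- interpolation uniqueness at zero
  have hzero : ∀ t : Fin n → Set.Icc (-1 : ℝ) 1, Function.Injective t →
      ∀ v : C(Set.Icc (-1 : ℝ) 1, ℝ), v ∈ V → (∀ j, v (t j) = 0) → v = 0 := by
    intro t ht v hv hvt
    obtain ⟨w, -, huniq⟩ := hCheb.2 t ht 0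
    have h1 := huniq v ⟨hv, fun i => hvt i⟩
    have h2 := huniq 0 ⟨V.zero_mem, fun i => rfl⟩
    rw [h1, h2]
  -- det nonzero at injective tuples
  have hne : ∀ t : Fin n → Set.Icc (-1 : ℝ) 1, Function.Injective t → D t ≠ 0 := by
    intro t ht h0
    obtain ⟨c, hc, hcM⟩ := Matrix.exists_vecMul_eq_zero_iff.mpr h0
    set v : C(Set.Icc (-1 : ℝ) 1, ℝ) := ∑ i, c i • L i with hv
    have hvV : v ∈ V := Submodule.sum_mem _ fun i _ => V.smul_mem _ (hL_mem i)
    have hvapp : ∀ y, v y = ∑ i, c i * L i y := by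
      intro y
      simp [hv]
    have hvt : ∀ j, v (t j) = 0 := by
      intro j
      have := congr_fun hcM j
      rw [hvapp]
      simpa [Matrix.vecMul, dotProduct] using this
    have hv0 := hzero t ht v hvV hvt
    apply hc
    funext j
    have h3 : v (ξ j) = c j := by
      rw [hvapp]
      simp [hL_interp]
    rw [hv0] at h3
    simpa using h3.symm
  -- det positive at strictly monotone tuples
  have hpos : ∀ t : Fin n → Set.Icc (-1 : ℝ) 1, StrictMono t → 0 < D t := by
    intro t ht
    set clamp : ℝ → Set.Icc (-1 : ℝ) 1 :=
      fun y => ⟨max (-1) (min 1 y), le_max_left _ _, max_le (by norm_num) (min_le_left _ _)⟩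
      with hclamp
    have hclamp_coe : ∀ y : ℝ, y ∈ Set.Icc (-1 : ℝ) 1 → (clamp y : ℝ) = y := by
      intro y hy
      show -1 ⊔ 1 ⊓ y = y
      rw [min_eq_right hy.2, max_eq_right hy.1]
    set p : ℝ → (Fin n → Set.Icc (-1 : ℝ) 1) :=
      fun s j => clamp ((1 - s) * (ξ j : ℝ) + s * (t j : ℝ)) with hp
    have hmem : ∀ s : ℝ, s ∈ Set.Icc (0 : ℝ) 1 → ∀ j,
        (1 - s) * (ξ j : ℝ) + s * (t j : ℝ) ∈ Set.Icc (-1 : ℝ) 1 := by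
      intro s hs j
      have h1 := (ξ j).2
      have h2 := (t j).2
      simp only [Set.mem_Icc] at h1 h2 ⊢
      constructor <;> nlinarith [hs.1, hs.2, h1.1, h1.2, h2.1, h2.2]
    have hpmono : ∀ s : ℝ, s ∈ Set.Icc (0 : ℝ) 1 → StrictMono (p s) := by
      intro s hs a b hab
      have hξab : (ξ a : ℝ) < ξ b := hξ hab
      have htab : (t a : ℝ) < t b := ht hab
      have hkey : (1 - s) * (ξ a : ℝ) + s * (t a : ℝ) <
          (1 - s) * (ξ b : ℝ) + s * (t b : ℝ) := by
        rcases eq_or_lt_of_le hs.1 with h | h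
        · rw [← h]; simpa using hξab
        · nlinarith [hs.2]
      show p s a < p s b
      rw [← Subtype.coe_lt_coe]
      show (clamp _ : ℝ) < (clamp _ : ℝ)
      rw [hclamp_coe _ (hmem s hs a), hclamp_coe _ (hmem s hs b)]
      exact hkey
    have hcont : Continuous fun s => D (p s) := by
      rw [hDdef]
      apply Continuous.matrix_det
      apply continuous_matrix
      intro i j
      apply (L i).continuous.comp
      apply Continuous.subtype_mk
      fun_prop
    have hp0 : p 0 = ξ := by
      funext j
      apply Subtype.ext
      show (clamp ((1 - 0) * (ξ j : ℝ) + 0 * (t j : ℝ)) : ℝ) = (ξ j : ℝ)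
      have he : (1 - 0) * (ξ j : ℝ) + 0 * (t j : ℝ) = (ξ j : ℝ) := by ring
      rw [he, hclamp_coe _ (ξ j).2]
    have hp1 : p 1 = t := by
      funext j
      apply Subtype.ext
      show (clamp ((1 - 1) * (ξ j : ℝ) + 1 * (t j : ℝ)) : ℝ) = (t j : ℝ)
      have he : (1 - 1) * (ξ j : ℝ) + 1 * (t j : ℝ) = (t j : ℝ) := by ring
      rw [he, hclamp_coe _ (t j).2]
    have hD0 : D (p 0) = 1 := by
      rw [hp0, hDdef]
      show (Matrix.of fun i j => L i (ξ j)).det = 1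
      have : (Matrix.of fun i j => L i (ξ j)) = (1 : Matrix (Fin n) (Fin n) ℝ) := by
        ext i j
        simp [hL_interp, Matrix.one_apply]
      rw [this, Matrix.det_one]
    by_contra hle
    push_neg at hle
    have hD1 : D (p 1) ≤ 0 := by rw [hp1]; exact hle
    have hmem0 : (0 : ℝ) ∈ Set.Icc (D (p 1)) (D (p 0)) := ⟨hD1, by rw [hD0]; norm_num⟩
    obtain ⟨s, hs, hfs⟩ := intermediate_value_Icc' (by norm_num : (0 : ℝ) ≤ 1)
      hcont.continuousOn hmem0
    exact hne (p s) (hpmono s hs).injective hfs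
  -- determinant of the matrix for a tuple with one node replaced by x
  have hmat : ∀ c : Fin n, (Matrix.of fun i j => L i (Function.update ξ c x j)) =
      (1 : Matrix (Fin n) (Fin n) ℝ).updateCol c (fun i => L i x) := by
    intro c
    ext i j
    by_cases hj : j = c
    · subst hj
      simp [Matrix.updateCol_apply]
    · simp [Matrix.updateCol_apply, hj, Function.update_of_ne hj, hL_interp,
        Matrix.one_apply]
  have hDup : ∀ c : Fin n, D (Function.update ξ c x) = L c x := by
    intro c
    rw [hDdef]
    show (Matrix.of fun i j => L i (Function.update ξ c x j)).det = L c x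
    rw [hmat c, ← Matrix.cramer_apply, Matrix.cramer_one]
    rfl
  have hPos : ∀ c : Fin n, StrictMono (Function.update ξ c x) → 0 < L c x := by
    intro c hmono
    have := hpos _ hmono
    rwa [hDup c] at this
  have hNeg : ∀ c c' : Fin n, c ≠ c' →
      StrictMono (Function.update ξ c' x ∘ Equiv.swap c c') → L c' x < 0 := by
    intro c c' hcc hmono
    have h := hpos _ hmono
    have heq : (Matrix.of fun i j => L i ((Function.update ξ c' x ∘ Equiv.swap c c') j))
        = (Matrix.of fun i j => L i (Function.update ξ c' x j)).submatrix id
            (Equiv.swap c c') := rfl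
    have h2 : D (Function.update ξ c' x ∘ Equiv.swap c c') = - L c' x := by
      rw [hDdef]
      show (Matrix.of fun i j =>
        L i ((Function.update ξ c' x ∘ Equiv.swap c c') j)).det = _
      rw [heq, Matrix.det_permute' (Equiv.swap c c'), Equiv.Perm.sign_swap hcc]
      have h3 : (Matrix.of fun i j => L i (Function.update ξ c' x j)).det = L c' x := by
        rw [hmat c', ← Matrix.cramer_apply, Matrix.cramer_one]; rfl
      rw [h3]
      simp
    rw [h2] at h
    linarith
  -- values of the swapped update
  have huval : ∀ (c c' : Fin n), c ≠ c' → ∀ j,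
      (Function.update ξ c' x ∘ Equiv.swap c c') j =
        if j = c then x else if j = c' then ξ c else ξ j := by
    intro c c' hcc j
    by_cases h1 : j = c
    · subst h1
      rw [if_pos rfl]
      simp only [Function.comp_apply]
      rw [Equiv.swap_apply_left, Function.update_self]
    · rw [if_neg h1]
      by_cases h2 : j = c'
      · subst h2
        rw [if_pos rfl]
        simp only [Function.comp_apply]
        rw [Equiv.swap_apply_right, Function.update_of_ne hcc]
      · rw [if_neg h2]
        simp only [Function.comp_apply]
        rw [Equiv.swap_apply_of_ne_of_ne h1 h2, Function.update_of_ne h2]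
  -- the splitting index k: ξ j < x for j < k, x < ξ j for j ≥ k
  have hexh : ∀ j : Fin n, ξ j < x ∨ x < ξ j := fun j => lt_or_gt_of_ne (hxne j)
  obtain ⟨k, hkn, hdown, hup⟩ : ∃ k : ℕ, k ≤ n ∧
      (∀ (m : ℕ) (hm : m < n), m < k → ξ ⟨m, hm⟩ < x) ∧
      (∀ (m : ℕ) (hm : m < n), k ≤ m → x < ξ ⟨m, hm⟩) := by
    by_cases hex : ∃ j : Fin n, x < ξ j
    · set S : Finset (Fin n) := Finset.univ.filter fun j : Fin n => x < ξ j with hS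
      have hSne : S.Nonempty := by
        obtain ⟨j0, hj0⟩ := hex
        exact ⟨j0, by simp [hS, hj0]⟩
      set j1 : Fin n := S.min' hSne with hj1
      refine ⟨j1.1, by omega, ?_, ?_⟩
      · intro m hm hmk
        refine (hexh ⟨m, hm⟩).resolve_right fun hlt => ?_
        have h5 : j1 ≤ ⟨m, hm⟩ := S.min'_le _ (by simp [hS, hlt])
        have h6 : j1.1 ≤ m := h5
        omega
      · intro m hm hkm
        have h1 : x < ξ j1 := by
          have := S.min'_mem hSne
          simpa [hS] using this
        exact h1.trans_le (hξ.monotone (by rw [Fin.le_def]; exact hkm))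
    · push_neg at hex
      refine ⟨n, le_refl n, fun m hm _ => ?_, fun m hm hnm => absurd hm (by omega)⟩
      exact (hexh ⟨m, hm⟩).resolve_right (by simpa using hex ⟨m, hm⟩)
  -- convenient form of hξ
  have hξ' : ∀ (a b : ℕ) (ha : a < n) (hb : b < n), a < b → ξ ⟨a, ha⟩ < ξ ⟨b, hb⟩ :=
    fun a b ha hb h => hξ (Fin.mk_lt_mk.mpr h)
  -- positive index: min k (n-1)
  have hposL : 0 < L ⟨min k (n - 1), by omega⟩ x := by
    apply hPos
    refine lagrange_sm_helper _ fun i hi => ?_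
    simp only [Function.update_apply, Fin.mk.injEq]
    split_ifs with h1 h2 h2 <;>
      first
        | (exfalso; omega)
        | exact hup _ _ (by omega)
        | exact hdown _ _ (by omega)
        | exact hξ' _ _ _ _ (by omega)
  rcases le_or_gt k (n - 2) with hkc | hkc
  · -- use right neighbor: c = ⟨k⟩, c' = ⟨k+1⟩
    refine ⟨_, ⟨k + 1, by omega⟩, hposL, ?_⟩
    refine hNeg ⟨k, by omega⟩ _ (by simp only [ne_eq, Fin.mk.injEq]; omega) ?_
    refine lagrange_sm_helper _ fun i hi => ?_
    rw [huval _ _ (by simp only [ne_eq, Fin.mk.injEq]; omega) _, huval _ _ (by simp only [ne_eq, Fin.mk.injEq]; omega) _]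
    simp only [Fin.mk.injEq]
    split_ifs with h1 h2 h3 h4 h5 h6 <;>
      first
        | (exfalso; omega)
        | exact hup _ _ (by omega)
        | exact hdown _ _ (by omega)
        | exact hξ' _ _ _ _ (by omega)
  · -- use left pair: c = ⟨k-1⟩, c' = ⟨k-2⟩
    refine ⟨_, ⟨k - 2, by omega⟩, hposL, ?_⟩
    refine hNeg ⟨k - 1, by omega⟩ _ (by simp only [ne_eq, Fin.mk.injEq]; omega) ?_
    refine lagrange_sm_helper _ fun i hi => ?_
    rw [huval _ _ (by simp only [ne_eq, Fin.mk.injEq]; omega) _, huval _ _ (by simp only [ne_eq, Fin.mk.injEq]; omega) _]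
    simp only [Fin.mk.injEq]
    split_ifs with h1 h2 h3 h4 h5 h6 <;>
      first
        | (exfalso; omega)
        | exact hup _ _ (by omega)
        | exact hdown _ _ (by omega)
        | exact hξ' _ _ _ _ (by omega)
end

section
/- Let V be an n-dimensional Chebyshev subspace of C([-1,1]) with n ≥ 2, let ξ^1 < ξ^2 < ... < ξ^n be points of [-1,1], and for each i let L_i be the unique element of V with L_i(ξ^j) = δ_{i,j} for all j. Then for every i ∈ {1,...,n−1} and every x with ξ^i < x < ξ^{i+1}, one has L_i(x) > 0 and L_{i+1}(x) > 0. -/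
/-- for a Chebyshev space of dimension `n ≥ 2` and ordered points
`ξ¹ < ⋯ < ξⁿ`, the fundamental Lagrange interpolators satisfy `Lᵢ(x) > 0` and
`Lᵢ₊₁(x) > 0` whenever `ξⁱ < x < ξⁱ⁺¹`. -/
theorem lagrange_interpolators_positive_between_consecutive_nodes
    (n : ℕ) (hn : 2 ≤ n)
    (V : Submodule ℝ C(Set.Icc (-1 : ℝ) 1, ℝ))
    (hCheb : IsChebyshev n V)
    (ξ : Fin n → Set.Icc (-1 : ℝ) 1) (hξ : StrictMono ξ)
    (L : Fin n → C(Set.Icc (-1 : ℝ) 1, ℝ))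
    (hL_mem : ∀ i, L i ∈ V)
    (hL_interp : ∀ i j, L i (ξ j) = if i = j then 1 else 0) :
    ∀ i j : Fin n, (i : ℕ) + 1 = (j : ℕ) →
      ∀ x : Set.Icc (-1 : ℝ) 1, ξ i < x → x < ξ j →
        0 < L i x ∧ 0 < L j x := by
  intro i j hij x hix hxj
  -- key: for k = i or k = j, L k does not vanish strictly between ξ i and ξ j
  have key : ∀ k : Fin n, ∀ y : Set.Icc (-1 : ℝ) 1,
      ξ i < y → y < ξ j → L k y ≠ 0 := by
    intro k y h1 h2 h0
    have hyne : ∀ m, y ≠ ξ m := by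
      intro m
      rcases le_or_gt m i with hm | hm
      · exact (lt_of_le_of_lt (hξ.monotone hm) h1).ne'
      · have hjm : j ≤ m := by
          rw [Fin.le_def]
          rw [Fin.lt_def] at hm
          omega
        exact (h2.trans_le (hξ.monotone hjm)).ne
    set η := Function.update ξ k y with hη
    have hinj : Function.Injective η := by
      intro a b hab
      by_cases ha : a = k <;> by_cases hb : b = k
      · rw [ha, hb]
      · rw [hη, ha, Function.update_self, Function.update_of_ne hb] at hab
        exact absurd hab (hyne b)
      · rw [hη, hb, Function.update_self, Function.update_of_ne ha] at hab
        exact absurd hab.symm (hyne a)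
      · rw [hη, Function.update_of_ne ha, Function.update_of_ne hb] at hab
        exact hξ.injective hab
    have hval : ∀ m, L k (η m) = 0 := by
      intro m
      by_cases hm : m = k
      · subst hm; simp [hη, h0]
      · rw [hη, Function.update_of_ne hm, hL_interp]
        exact if_neg (fun h => hm h.symm)
    obtain ⟨w, _, huniq⟩ := hCheb.2 η hinj 0
    have h1' := huniq (L k) ⟨hL_mem k, fun m => by simpa using hval m⟩
    have h2' := huniq 0 ⟨V.zero_mem, fun m => by simp⟩
    have hLk0 : L k = 0 := h1'.trans h2'.symm
    have := hL_interp k k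
    rw [hLk0] at this
    simp at this
  -- membership of reals between the nodes in [-1,1]
  have hne : (-1 : ℝ) ≤ 1 := by norm_num
  constructor
  · -- L i x > 0
    by_contra hpos
    push_neg at hpos
    have hne0 : L i x ≠ 0 := key i x hix hxj
    have hlt : L i x < 0 := lt_of_le_of_ne hpos hne0
    set g : ℝ → ℝ := fun t => L i (Set.projIcc (-1) 1 hne t) with hg
    have hgc : Continuous g := (L i).continuous.comp (continuous_projIcc)
    have hab : (ξ i : ℝ) ≤ (x : ℝ) := le_of_lt hix
    have hmem := intermediate_value_Ioo' hab hgc.continuousOn (a := (ξ i : ℝ)) (b := (x : ℝ))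
    have hga : g (ξ i : ℝ) = 1 := by
      rw [hg]; simp only []
      rw [Set.projIcc_of_mem hne (ξ i).2]
      simpa using hL_interp i i
    have hgb : g (x : ℝ) = L i x := by
      rw [hg]; simp only []
      rw [Set.projIcc_of_mem hne x.2]
    have h0mem : (0 : ℝ) ∈ Set.Ioo (g (x : ℝ)) (g (ξ i : ℝ)) := by
      rw [hga, hgb]; exact ⟨hlt, one_pos⟩
    obtain ⟨t, ht, hgt⟩ := hmem h0mem
    have htI : t ∈ Set.Icc (-1 : ℝ) 1 :=
      ⟨le_trans (ξ i).2.1 ht.1.le, le_trans ht.2.le x.2.2⟩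
    have : L i (⟨t, htI⟩ : Set.Icc (-1 : ℝ) 1) = 0 := by
      rw [← hgt, hg]; simp only []
      rw [Set.projIcc_of_mem hne htI]
    exact key i ⟨t, htI⟩ ht.1 (lt_trans ht.2 hxj) this
  · -- L j x > 0
    by_contra hpos
    push_neg at hpos
    have hne0 : L j x ≠ 0 := key j x hix hxj
    have hlt : L j x < 0 := lt_of_le_of_ne hpos hne0
    set g : ℝ → ℝ := fun t => L j (Set.projIcc (-1) 1 hne t) with hg
    have hgc : Continuous g := (L j).continuous.comp (continuous_projIcc)
    have hab : (x : ℝ) ≤ (ξ j : ℝ) := le_of_lt hxj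
    have hmem := intermediate_value_Ioo hab hgc.continuousOn (a := (x : ℝ)) (b := (ξ j : ℝ))
    have hga : g (ξ j : ℝ) = 1 := by
      rw [hg]; simp only []
      rw [Set.projIcc_of_mem hne (ξ j).2]
      simpa using hL_interp j j
    have hgb : g (x : ℝ) = L j x := by
      rw [hg]; simp only []
      rw [Set.projIcc_of_mem hne x.2]
    have h0mem : (0 : ℝ) ∈ Set.Ioo (g (x : ℝ)) (g (ξ j : ℝ)) := by
      rw [hga, hgb]; exact ⟨hlt, one_pos⟩
    obtain ⟨t, ht, hgt⟩ := hmem h0mem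
    have htI : t ∈ Set.Icc (-1 : ℝ) 1 :=
      ⟨le_trans x.2.1 ht.1.le, le_trans ht.2.le (ξ j).2.2⟩
    have : L j (⟨t, htI⟩ : Set.Icc (-1 : ℝ) 1) = 0 := by
      rw [← hgt, hg]; simp only []
      rw [Set.projIcc_of_mem hne htI]
    exact key j ⟨t, htI⟩ (lt_trans hix ht.1) ht.2 this
end

section
/- (Mairhuber–Curtis theorem) Let d ≥ 2 and let X ⊆ ℝ^d be a compact set containing an interior point. Then C(X) contains no Chebyshev subspace of dimension n ≥ 2: for every subspace V of C(X) with dim V = n ≥ 2, there exist distinct points ξ^1,...,ξ^n ∈ X and values γ ∈ ℝ^n for which the interpolation problem v ∈ V, v(ξ^i) = γ_i for all i, fails to have a unique solution. -/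
open scoped Real RealInnerProductSpace

set_option maxHeartbeats 1000000 in
/-- Mairhuber–Curtis: for `d ≥ 2` and a compact set `X ⊆ ℝ^d` with an
interior point, no subspace of `C(X)` of dimension `n ≥ 2` is a Chebyshev space: there
are distinct points `ξ¹, …, ξⁿ ∈ X` and values `γ ∈ ℝⁿ` for which interpolation from `V`
fails to have a unique solution. -/
theorem mairhuber_curtis
    (d : ℕ) (hd : 2 ≤ d)
    (X : Set (EuclideanSpace ℝ (Fin d)))
    (hXcompact : IsCompact X) (hXint : (interior X).Nonempty)
    (n : ℕ) (hn : 2 ≤ n)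
    (V : Submodule ℝ C(X, ℝ)) (hdim : Module.finrank ℝ V = n) :
    ∃ ξ : Fin n → X, Function.Injective ξ ∧
      ∃ γ : Fin n → ℝ,
        ¬ ∃! v : C(X, ℝ), v ∈ V ∧ ∀ i, v (ξ i) = γ i := by
  classical
  have hnpos : 0 < n := by omega
  haveI : FiniteDimensional ℝ V :=
    FiniteDimensional.of_finrank_pos (by omega)
  let b : Module.Basis (Fin n) ℝ V := Module.finBasisOfFinrankEq ℝ V hdim
  -- a ball inside X
  obtain ⟨c, hc⟩ := hXint
  obtain ⟨r, hr, hball⟩ := Metric.isOpen_iff.mp isOpen_interior c hc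
  have hball' : Metric.ball c r ⊆ X := hball.trans interior_subset
  -- two coordinate directions
  set i0 : Fin d := ⟨0, by omega⟩ with hi0
  set i1 : Fin d := ⟨1, by omega⟩ with hi1
  have hi01 : i0 ≠ i1 := by simp [hi0, hi1, Fin.ext_iff]
  set e₀ : EuclideanSpace ℝ (Fin d) := EuclideanSpace.single i0 (1 : ℝ) with he₀
  set e₁ : EuclideanSpace ℝ (Fin d) := EuclideanSpace.single i1 (1 : ℝ) with he₁
  have he₀n : ‖e₀‖ = 1 := by simp [he₀, EuclideanSpace.norm_single]
  have hnorm : ∀ θ : ℝ, ‖Real.cos θ • e₀ + Real.sin θ • e₁‖ = 1 := by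
    intro θ
    have hinner : ⟪Real.cos θ • e₀, Real.sin θ • e₁⟫ = 0 := by
      rw [real_inner_smul_left, real_inner_smul_right]
      have h0 : ⟪e₀, e₁⟫ = 0 := by
        rw [he₀, he₁, EuclideanSpace.inner_single_left]
        simp [EuclideanSpace.single_apply, hi01]
      rw [h0]; ring
    have hsq : ‖Real.cos θ • e₀ + Real.sin θ • e₁‖ ^ 2 = 1 := by
      have key := Real.sin_sq_add_cos_sq θ
      rw [norm_add_sq_real, hinner]
      simp only [norm_smul, he₀n, Real.norm_eq_abs, mul_one, abs_one, mul_zero, add_zero,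
        EuclideanSpace.norm_single, he₁, sq_abs]
      linarith
    have h1 : ‖Real.cos θ • e₀ + Real.sin θ • e₁‖
        = Real.sqrt (‖Real.cos θ • e₀ + Real.sin θ • e₁‖ ^ 2) := by
      rw [Real.sqrt_sq (norm_nonneg _)]
    rw [h1, hsq, Real.sqrt_one]
  -- radii
  set ρ : ℝ := r / (4 * n) with hρdef
  have hρ : 0 < ρ := by positivity
  set s : Fin n → ℝ := fun i => ((i : ℕ) + 1) * r / (2 * n) with hsdef
  have hncast : (0 : ℝ) < (n : ℝ) := by exact_mod_cast hnpos
  have hspos : ∀ i, ρ < s i := by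
    intro i
    rw [hρdef, hsdef]
    rw [div_lt_div_iff₀ (by positivity) (by positivity)]
    have h1 : (1 : ℝ) ≤ ((i : ℕ) : ℝ) + 1 := by
      have : (0 : ℝ) ≤ ((i : ℕ) : ℝ) := Nat.cast_nonneg _
      linarith
    have hA : 0 ≤ ((i : ℕ) : ℝ) * r * (4 * (n : ℝ)) := by positivity
    have hB : 0 < r * (2 * (n : ℝ)) := by positivity
    nlinarith [hA, hB]
  have hsr : ∀ i, s i < r := by
    intro i
    rw [hsdef]
    have hin : ((i : ℕ) : ℝ) + 1 ≤ (n : ℝ) := by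
      have h : (i : ℕ) + 1 ≤ n := i.isLt
      exact_mod_cast h
    rw [div_lt_iff₀ (by positivity)]
    nlinarith [mul_le_mul_of_nonneg_right hin hr.le, mul_pos hncast hr]
  have hsinj : ∀ i j : Fin n, s i = s j → i = j := by
    intro i j hij
    rw [hsdef] at hij
    rw [div_eq_div_iff (by positivity : (2*(n:ℝ)) ≠ 0) (by positivity : (2*(n:ℝ)) ≠ 0)] at hij
    have h2 : (((i : ℕ) : ℝ) + 1) * r = (((j : ℕ) : ℝ) + 1) * r :=
      mul_right_cancel₀ (by positivity) hij
    have h3 : ((i : ℕ) : ℝ) = ((j : ℕ) : ℝ) := by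
      have := mul_right_cancel₀ (ne_of_gt hr) h2
      linarith
    exact Fin.ext (by exact_mod_cast h3)
  -- the moving points
  set u : ℝ → EuclideanSpace ℝ (Fin d) :=
    fun t => ρ • (Real.cos (π * t) • e₀ + Real.sin (π * t) • e₁) with hudef
  have hu : ∀ t, ‖u t‖ = ρ := by
    intro t
    rw [hudef]
    simp only [norm_smul, hnorm, Real.norm_eq_abs, mul_one, abs_of_pos hρ]
  obtain ⟨j0, j1, hj01⟩ : ∃ a b : Fin n, a ≠ b :=
    ⟨⟨0, by omega⟩, ⟨1, by omega⟩, by simp [Fin.ext_iff]⟩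
  set P : ℝ → Fin n → EuclideanSpace ℝ (Fin d) := fun t i =>
    if i = j0 then c + u t else if i = j1 then c - u t else c + s i • e₀ with hPdef
  have hPX : ∀ t i, P t i ∈ X := by
    intro t i
    apply hball'
    rw [hPdef]
    dsimp only
    split_ifs
    · simp [Metric.mem_ball, dist_eq_norm, add_sub_cancel_left, hu]
      linarith [hspos j0, hsr j0]
    · simp only [Metric.mem_ball, dist_eq_norm]
      have : c - u t - c = -(u t) := by abel
      rw [this, norm_neg, hu]
      linarith [hspos j0, hsr j0]
    · simp only [Metric.mem_ball, dist_eq_norm, add_sub_cancel_left]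
      rw [norm_smul, Real.norm_eq_abs, he₀n, mul_one,
        abs_of_pos (lt_trans hρ (hspos i))]
      exact hsr i
  have hune : ∀ t, u t ≠ 0 := by
    intro t h
    have := hu t
    rw [h, norm_zero] at this
    exact absurd this.symm (ne_of_gt hρ)
  have hPinj : ∀ t, Function.Injective (P t) := by
    intro t i j hij
    rw [hPdef] at hij
    dsimp only at hij
    split_ifs at hij with h1 h2 h3 h4 h5 h6 h7 h8
    · rw [h1, h2]
    · -- c + u t = c - u t
      exfalso
      have : u t + u t = 0 := by
        have := hij
        have h := sub_eq_zero.mpr hij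
        rw [show c + u t - (c - u t) = u t + u t by abel] at h
        exact h
      have h2 : (2 : ℝ) • u t = 0 := by rw [two_smul]; exact this
      exact hune t (by simpa using (smul_eq_zero.mp h2).resolve_left (by norm_num))
    · -- c + u t = c + s j • e₀
      exfalso
      have h := add_left_cancel hij
      have := hu t
      rw [h, norm_smul, Real.norm_eq_abs, he₀n, mul_one,
        abs_of_pos (lt_trans hρ (hspos j))] at this
      exact absurd this (ne_of_gt (hspos j))
    · -- c - u t = c + u t
      exfalso
      have h := sub_eq_zero.mpr hij
      rw [show c - u t - (c + u t) = -(u t + u t) by abel, neg_eq_zero] at h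
      have h2 : (2 : ℝ) • u t = 0 := by rw [two_smul]; exact h
      exact hune t (by simpa using (smul_eq_zero.mp h2).resolve_left (by norm_num))
    · rw [h4, h6]
    · -- c - u t = c + s j • e₀
      exfalso
      have h : -(u t) = s j • e₀ := by
        have h := sub_eq_zero.mpr hij
        rw [show c - u t - (c + s j • e₀) = -(u t) - s j • e₀ by abel] at h
        exact sub_eq_zero.mp h
      have := hu t
      rw [← norm_neg, h, norm_smul, Real.norm_eq_abs, he₀n, mul_one,
        abs_of_pos (lt_trans hρ (hspos j))] at this
      exact absurd this (ne_of_gt (hspos j))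
    · -- c + s i • e₀ = c + u t
      exfalso
      have h := (add_left_cancel hij).symm
      have := hu t
      rw [h, norm_smul, Real.norm_eq_abs, he₀n, mul_one,
        abs_of_pos (lt_trans hρ (hspos i))] at this
      exact absurd this (ne_of_gt (hspos i))
    · -- c + s i • e₀ = c - u t
      exfalso
      have h : -(u t) = s i • e₀ := by
        have h := sub_eq_zero.mpr hij.symm
        rw [show c - u t - (c + s i • e₀) = -(u t) - s i • e₀ by abel] at h
        exact sub_eq_zero.mp h
      have := hu t
      rw [← norm_neg, h, norm_smul, Real.norm_eq_abs, he₀n, mul_one,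
        abs_of_pos (lt_trans hρ (hspos i))] at this
      exact absurd this (ne_of_gt (hspos i))
    · -- c + s i • e₀ = c + s j • e₀
      have h := add_left_cancel hij
      have h2 : (s i - s j) • e₀ = 0 := by rw [sub_smul, h, sub_self]
      rcases smul_eq_zero.mp h2 with h3 | h3
      · exact hsinj i j (by linarith [sub_eq_zero.mp (by exact_mod_cast h3)])
      · exfalso
        rw [h3, norm_zero] at he₀n
        norm_num at he₀n
  -- the swap at t = 1
  have hu1 : u 1 = -(u 0) := by
    rw [hudef]
    simp only [mul_one, mul_zero, Real.cos_pi, Real.sin_pi, Real.cos_zero, Real.sin_zero]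
    module
  have hP0 : ∀ t, P t j0 = c + u t := by intro t; rw [hPdef]; simp
  have hP1 : ∀ t, P t j1 = c - u t := by
    intro t; rw [hPdef]; simp [Ne.symm hj01]
  have hPo : ∀ t i, i ≠ j0 → i ≠ j1 → P t i = c + s i • e₀ := by
    intro t i h0 h1; rw [hPdef]; simp [h0, h1]
  have hswap : ∀ i, P 1 i = P 0 (Equiv.swap j0 j1 i) := by
    intro i
    by_cases h0 : i = j0
    · rw [h0, Equiv.swap_apply_left, hP0, hP1, hu1]; abel
    · by_cases h1 : i = j1
      · rw [h1, Equiv.swap_apply_right, hP1, hP0, hu1]; abel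
      · rw [Equiv.swap_apply_of_ne_of_ne h0 h1, hPo 1 i h0 h1, hPo 0 i h0 h1]
  -- points as elements of X
  set Ξ : ℝ → Fin n → X := fun t i => ⟨P t i, hPX t i⟩ with hΞdef
  set M : ℝ → Matrix (Fin n) (Fin n) ℝ :=
    fun t i j => (b j : C(X, ℝ)) (Ξ t i) with hMdef
  have hPcont : ∀ i, Continuous fun t => P t i := by
    intro i
    rw [hPdef]
    dsimp only
    by_cases h0 : i = j0
    · simp only [if_pos h0]
      apply continuous_const.add
      exact (((Real.continuous_cos.comp (continuous_const.mul continuous_id)).smul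
        continuous_const).add ((Real.continuous_sin.comp
        (continuous_const.mul continuous_id)).smul continuous_const)).const_smul ρ
    · by_cases h1 : i = j1
      · simp only [if_neg h0, if_pos h1]
        apply continuous_const.sub
        exact (((Real.continuous_cos.comp (continuous_const.mul continuous_id)).smul
          continuous_const).add ((Real.continuous_sin.comp
          (continuous_const.mul continuous_id)).smul continuous_const)).const_smul ρ
      · simp only [if_neg h0, if_neg h1]
        exact continuous_const
  have hMcont : Continuous fun t => (M t).det := by
    apply Continuous.matrix_det
    apply continuous_matrix
    intro i j
    exact (b j : C(X, ℝ)).continuous.comp ((hPcont i).subtype_mk _)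
  have hdetswap : (M 1).det = -(M 0).det := by
    have hM1 : M 1 = (M 0).submatrix (Equiv.swap j0 j1) id := by
      ext i j
      rw [hMdef]
      simp only [Matrix.submatrix_apply, id_eq]
      congr 1
      rw [hΞdef]
      exact congrArg (fun x : X => (b j : C(X, ℝ)) x)
        (Subtype.ext (a1 := ⟨P 1 i, hPX 1 i⟩) (a2 := ⟨P 0 (Equiv.swap j0 j1 i), hPX 0 _⟩) (hswap i))
    rw [hM1, Matrix.det_permute, Equiv.Perm.sign_swap hj01]
    simp
  -- IVT: find a point with vanishing determinant
  obtain ⟨t₀, _, ht₀⟩ : ∃ t ∈ Set.uIcc (0 : ℝ) 1, (M t).det = 0 := by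
    have h0 : (0 : ℝ) ∈ Set.uIcc ((M 0).det) ((M 1).det) := by
      rw [hdetswap]
      rcases le_total 0 ((M 0).det) with h | h
      · exact Set.mem_uIcc.2 (Or.inr ⟨neg_nonpos.2 h, h⟩)
      · exact Set.mem_uIcc.2 (Or.inl ⟨h, neg_nonneg.2 h⟩)
    obtain ⟨t, ht, h⟩ := intermediate_value_uIcc (hMcont.continuousOn) h0
    exact ⟨t, ht, h⟩
  -- kernel vector
  obtain ⟨cv, hcv0, hcvM⟩ := Matrix.exists_mulVec_eq_zero_iff.mpr ht₀
  refine ⟨Ξ t₀, ?_, 0, ?_⟩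
  · intro i j hij
    exact hPinj t₀ (congrArg Subtype.val hij)
  · rintro ⟨v, -, huniq⟩
    set w : V := ∑ j, cv j • b j with hwdef
    have hwcoe : (w : C(X, ℝ)) = ∑ j, cv j • (b j : C(X, ℝ)) := by
      rw [hwdef]
      push_cast
      rfl
    have hwv : ∀ i, (w : C(X, ℝ)) (Ξ t₀ i) = 0 := by
      intro i
      have hmv := congrFun hcvM i
      simp only [Matrix.mulVec, dotProduct, Pi.zero_apply, hMdef] at hmv
      rw [hwcoe, ContinuousMap.sum_apply]
      simp only [ContinuousMap.smul_apply, smul_eq_mul]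
      rw [← hmv]
      exact Finset.sum_congr rfl fun j _ => mul_comm _ _
    have hw0 : (w : C(X, ℝ)) ≠ 0 := by
      intro h
      apply hcv0
      have hwz : w = 0 := by
        exact Subtype.ext h
      rw [hwdef] at hwz
      have := Fintype.linearIndependent_iff.mp b.linearIndependent cv hwz
      funext j
      exact this j
    have h1 : w = v := huniq (w : C(X, ℝ)) ⟨w.2, fun i => by simp [hwv i]⟩
    have h2 : (0 : C(X, ℝ)) = v := huniq 0 ⟨V.zero_mem, fun i => by simp⟩
    exact hw0 (h1.trans h2.symm)
end
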